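/- arXiv:2409.12529 — 7 statements merged into one kernel-verified Lean document; each statement's English description precedes it below -/
import Mathlib

section
/- For every natural number k, the following identity holds in the polynomial ring Q[x,y]: Σ_{n=0}^{k} ((−1)^{k−n} x^{k−n}/(k−n)!) · Σ_{i=0}^{n} x^i y^{2n−2i+1}/(i! (2n−2i+1)!!) = y^{2k+1}/(2k+1)!!. -/
open MvPolynomial Finset

/-- `x` in `ℚ[x,y]`. -/
noncomputable def xP : MvPolynomial (Fin 2) ℚ := X 0
/-- `y` in `ℚ[x,y]`. -/
noncomputable def yP : MvPolynomial (Fin 2) ℚ := X 1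

lemma key (N : ℕ) :
    ∑ m ∈ range (N + 1), (-1 : ℚ) ^ (N - m) / ((N - m).factorial * m.factorial)
      = if N = 0 then 1 else 0 := by
  have h : ((∑ m ∈ range (N + 1), (-1 : ℤ) ^ m * N.choose m : ℤ) : ℚ)
      = if N = 0 then 1 else 0 := by
    rw [Int.alternating_sum_range_choose]; split <;> simp
  push_cast at h
  have main : ∑ m ∈ range (N + 1), (-1 : ℚ) ^ (N - m) / ((N - m).factorial * m.factorial)
      = (∑ m ∈ range (N + 1), (-1 : ℚ) ^ m * N.choose m) / N.factorial := by
    rw [Finset.sum_div, ← Finset.sum_range_reflect]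
    refine Finset.sum_congr rfl fun m hm => ?_
    simp only [mem_range] at hm
    have hm' : m ≤ N := by omega
    have h1 : N + 1 - 1 - m = N - m := by omega
    have h2 : N - (N - m) = m := by omega
    rw [h1, h2, Nat.cast_choose ℚ hm']
    have f0 : (N.factorial : ℚ) ≠ 0 := Nat.cast_ne_zero.2 N.factorial_ne_zero
    have f1 : (m.factorial : ℚ) ≠ 0 := Nat.cast_ne_zero.2 m.factorial_ne_zero
    have f2 : ((N - m).factorial : ℚ) ≠ 0 := Nat.cast_ne_zero.2 (N - m).factorial_ne_zero
    field_simp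
  rw [main, h]
  rcases Nat.eq_zero_or_pos N with h0 | h0
  · subst h0; norm_num
  · rw [if_neg (by omega), zero_div]

/-- For every natural number `k`,
`Σ_{n=0}^{k} ((−1)^{k−n} x^{k−n}/(k−n)!) · Σ_{i=0}^{n} x^i y^{2n−2i+1}/(i! (2n−2i+1)!!)
  = y^{2k+1}/(2k+1)!!` in `ℚ[x,y]`. -/
theorem stmt0 (k : ℕ) :
    ∑ n ∈ Finset.range (k + 1),
      (((-1 : ℚ) ^ (k - n) / (k - n).factorial) • xP ^ (k - n)) *
        ∑ i ∈ Finset.range (n + 1),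
          ((1 : ℚ) / (i.factorial * (2 * n - 2 * i + 1).doubleFactorial)) •
            (xP ^ i * yP ^ (2 * n - 2 * i + 1))
    = ((1 : ℚ) / (2 * k + 1).doubleFactorial) • yP ^ (2 * k + 1) := by
  -- Step 1: rewrite into a double sum with combined scalars
  have step1 : ∑ n ∈ Finset.range (k + 1),
      (((-1 : ℚ) ^ (k - n) / (k - n).factorial) • xP ^ (k - n)) *
        ∑ i ∈ Finset.range (n + 1),
          ((1 : ℚ) / (i.factorial * (2 * n - 2 * i + 1).doubleFactorial)) •
            (xP ^ i * yP ^ (2 * n - 2 * i + 1))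
      = ∑ n ∈ Finset.range (k + 1), ∑ j ∈ Finset.range (n + 1),
          ((-1 : ℚ) ^ (k - n) / ((k - n).factorial * (n - j).factorial *
            (2 * j + 1).doubleFactorial)) • (xP ^ (k - j) * yP ^ (2 * j + 1)) := by
    refine Finset.sum_congr rfl fun n hn => ?_
    simp only [mem_range] at hn
    have hn' : n ≤ k := by omega
    have inner : ∑ i ∈ Finset.range (n + 1),
        ((1 : ℚ) / (i.factorial * (2 * n - 2 * i + 1).doubleFactorial)) •
          (xP ^ i * yP ^ (2 * n - 2 * i + 1))
        = ∑ j ∈ Finset.range (n + 1),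
            ((1 : ℚ) / ((n - j).factorial * (2 * j + 1).doubleFactorial)) •
              (xP ^ (n - j) * yP ^ (2 * j + 1)) := by
      rw [← Finset.sum_range_reflect]
      refine Finset.sum_congr rfl fun j hj => ?_
      simp only [mem_range] at hj
      have e1 : n + 1 - 1 - j = n - j := by omega
      have e2 : 2 * n - 2 * (n - j) + 1 = 2 * j + 1 := by omega
      rw [e1, e2]
    rw [inner, Finset.mul_sum]
    refine Finset.sum_congr rfl fun j hj => ?_
    simp only [mem_range] at hj
    have e3 : xP ^ (k - n) * xP ^ (n - j) = xP ^ (k - j) := by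
      rw [← pow_add]; congr 1; omega
    rw [smul_mul_smul_comm, ← e3]
    congr 1
    · field_simp
    · ring
  rw [step1]
  -- Step 2: swap the order of summation
  have step2 : ∑ n ∈ Finset.range (k + 1), ∑ j ∈ Finset.range (n + 1),
          ((-1 : ℚ) ^ (k - n) / ((k - n).factorial * (n - j).factorial *
            (2 * j + 1).doubleFactorial)) • (xP ^ (k - j) * yP ^ (2 * j + 1))
      = ∑ j ∈ Finset.range (k + 1), ∑ n ∈ Finset.Ico j (k + 1),
          ((-1 : ℚ) ^ (k - n) / ((k - n).factorial * (n - j).factorial *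
            (2 * j + 1).doubleFactorial)) • (xP ^ (k - j) * yP ^ (2 * j + 1)) := by
    simp only [Finset.range_eq_Ico]
    rw [← Finset.sum_Ico_Ico_comm 0 (k + 1)]
  rw [step2]
  -- Step 3: compute the inner sum as a scalar
  have step3 : ∀ j ∈ Finset.range (k + 1),
      ∑ n ∈ Finset.Ico j (k + 1),
          ((-1 : ℚ) ^ (k - n) / ((k - n).factorial * (n - j).factorial *
            (2 * j + 1).doubleFactorial)) • (xP ^ (k - j) * yP ^ (2 * j + 1))
      = ((if k - j = 0 then (1:ℚ) else 0) / (2 * j + 1).doubleFactorial) •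
          (xP ^ (k - j) * yP ^ (2 * j + 1)) := by
    intro j hj
    simp only [mem_range] at hj
    rw [← Finset.sum_smul]
    congr 1
    rw [Finset.sum_Ico_eq_sum_range]
    have hsize : k + 1 - j = (k - j) + 1 := by omega
    rw [hsize]
    have := key (k - j)
    calc ∑ m ∈ range (k - j + 1),
          (-1 : ℚ) ^ (k - (j + m)) / ((k - (j + m)).factorial * ((j + m) - j).factorial *
            (2 * j + 1).doubleFactorial)
        = ∑ m ∈ range (k - j + 1),
            ((-1 : ℚ) ^ ((k - j) - m) / (((k - j) - m).factorial * m.factorial)) /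
              (2 * j + 1).doubleFactorial := by
          refine Finset.sum_congr rfl fun m hm => ?_
          simp only [mem_range] at hm
          have e1 : k - (j + m) = (k - j) - m := by omega
          have e2 : j + m - j = m := by omega
          rw [e1, e2, div_div]
      _ = (if k - j = 0 then (1:ℚ) else 0) / (2 * j + 1).doubleFactorial := by
          rw [← Finset.sum_div, key]
  rw [Finset.sum_congr rfl step3]
  -- Step 4: only j = k survives
  rw [Finset.sum_eq_single k]
  · simp
  · intro j hj hjk
    simp only [mem_range] at hj
    rw [if_neg (by omega), zero_div, zero_smul]
  · intro h; exact absurd (self_mem_range_succ k) h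
end

section
/- For m ≥ 0 define α_m := (−1)^{m+1} Σ_{i=0}^{m} x^i y^{2m−2i+1}/(2^{m−i} i! (m−i)! (2m−2i+1)) ∈ Q[x,y]. Then for every natural number k, the identity Σ_{n=0}^{k} (1/n!) (x + y²/2)^n α_{k−n} = − y^{2k+1}/(2k+1)!! holds in Q[x,y]. -/
open MvPolynomial Finset

/-- `α_m := (−1)^{m+1} Σ_{i=0}^{m} x^i y^{2m−2i+1}/(2^{m−i} i! (m−i)! (2m−2i+1))`. -/
noncomputable def alphaP (m : ℕ) : MvPolynomial (Fin 2) ℚ :=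
  ∑ i ∈ Finset.range (m + 1),
    ((-1 : ℚ) ^ (m + 1) / (2 ^ (m - i) * i.factorial * (m - i).factorial * (2 * m - 2 * i + 1))) •
      (xP ^ i * yP ^ (2 * m - 2 * i + 1))


/-- `S k j = ∑_{r=0}^k (-1)^r C(k,r)/(2(r+j)+1)`. -/
noncomputable def Sq (k j : ℕ) : ℚ :=
  ∑ r ∈ range (k + 1), (-1 : ℚ) ^ r * (k.choose r) / (2 * (r + j) + 1)

lemma Sq_rec (k j : ℕ) : Sq (k + 1) j = Sq k j - Sq k (j + 1) := by
  have h1 : Sq (k+1) j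
      = ∑ r ∈ range (k+1), (-1:ℚ)^(r+1) * ((k+1).choose (r+1)) / (2 * ((r+1) + j) + 1)
        + (-1:ℚ)^0 * ((k+1).choose 0) / (2 * ((0:ℕ) + j) + 1) := by
    rw [Sq, Finset.sum_range_succ' (fun r => (-1:ℚ)^r * ((k+1).choose r) / (2 * (r + j) + 1)) (k+1)]
    push_cast; ring_nf
    refine (add_comm _ _).trans ?_; congr 1; exact Finset.sum_congr rfl fun x _ => by ring
  have h2 : ∀ r : ℕ, (-1:ℚ)^(r+1) * ((k+1).choose (r+1)) / (2 * ((r+1) + j) + 1)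
      = -((-1:ℚ)^r * (k.choose r) / (2 * (r + (j+1)) + 1))
        + (-1:ℚ)^(r+1) * (k.choose (r+1)) / (2 * ((r+1) + j) + 1) := by
    intro r
    rw [Nat.choose_succ_succ]
    push_cast
    have : ((2:ℚ) * ((r+1) + j) + 1) = 2 * (r + (j+1)) + 1 := by ring
    rw [this]
    ring
  have h3 : Sq k j = ∑ r ∈ range (k+1), (-1:ℚ)^(r+1) * (k.choose (r+1)) / (2 * ((r+1) + j) + 1)
      + (-1:ℚ)^0 * (k.choose 0) / (2 * ((0:ℕ) + j) + 1) := by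
    rw [Sq, Finset.sum_range_succ (fun r => (-1:ℚ)^(r+1) * (k.choose (r+1)) / (2 * ((r+1) + j) + 1)) k]
    rw [Finset.sum_range_succ' (fun r => (-1:ℚ)^r * (k.choose r) / (2 * (r + j) + 1)) k]
    simp [Nat.choose_succ_self]
  rw [h1]
  simp only [h2]
  rw [Finset.sum_add_distrib, Finset.sum_neg_distrib]
  rw [h3, Sq]
  simp only [Nat.choose_zero_right]
  push_cast
  ring

lemma Sq_closed (k : ℕ) : ∀ j : ℕ, Sq k j * ((2*j+1 : ℚ) * ((2*(k+j)+1).doubleFactorial : ℚ))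
    = 2^k * (k.factorial : ℚ) * ((2*j+1).doubleFactorial : ℚ) := by
  induction k with
  | zero =>
    intro j
    have hj : (2*(j:ℚ)+1) ≠ 0 := by positivity
    rw [Sq, Finset.sum_range_one]
    push_cast
    field_simp
    simp
  | succ k ih =>
    intro j
    have e1 : (2*(k + 1 + j)+1) = (2*(k+j)+1) + 2 := by omega
    have e2 : (2*(j+1)+1) = (2*j+1) + 2 := by omega
    have e3 : (2*(k+(j+1))+1) = (2*(k+j)+1) + 2 := by omega
    have ih1 := ih j
    have ih2 := ih (j+1)
    rw [e3, e2, Nat.doubleFactorial_add_two, Nat.doubleFactorial_add_two] at ih2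
    -- cancel the (2j+3) factor in ih2
    have hj3 : ((2*j+1 : ℕ) + 2 : ℚ) ≠ 0 := by positivity
    have ih2' : Sq k (j+1) * (((2*(k+j)+1 : ℕ) + 2 : ℚ) * ((2*(k+j)+1).doubleFactorial : ℚ))
        = 2^k * (k.factorial : ℚ) * ((2*j+1).doubleFactorial : ℚ) := by
      apply mul_left_cancel₀ hj3
      push_cast at ih2 ⊢
      nlinarith [ih2]
    rw [Sq_rec, e1, Nat.doubleFactorial_add_two]
    have : (k+1).factorial = (k+1) * k.factorial := Nat.factorial_succ k
    rw [this]
    push_cast at ih1 ih2' ⊢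
    linear_combination (2*(k:ℚ)+2*(j:ℚ)+3) * ih1 - (2*(j:ℚ)+1) * ih2'


noncomputable def gq (b p : ℕ) : ℚ :=
  (-1)^p / ((b-p).factorial * 2^(b-p) * p.factorial * 2^p * (2*(p:ℚ)+1))

/-- The key alternating-sum identity. -/
lemma key_sum (b : ℕ) :
    ∑ p ∈ range (b + 1),
      (-1:ℚ)^(b-p) / (p.factorial * 2^p * (b-p).factorial * 2^(b-p) * (2*((b:ℚ)-p)+1))
    = 1 / ((2*b+1).doubleFactorial : ℚ) := by
  have hb : (b.factorial : ℚ) ≠ 0 := Nat.cast_ne_zero.mpr b.factorial_ne_zero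
  have h2 : ((2:ℚ)^b) ≠ 0 := by positivity
  have hdf : (((2*b+1).doubleFactorial : ℕ) : ℚ) ≠ 0 :=
    Nat.cast_ne_zero.mpr (Nat.doubleFactorial_pos _).ne'
  calc
    ∑ p ∈ range (b + 1),
        (-1:ℚ)^(b-p) / (p.factorial * 2^p * (b-p).factorial * 2^(b-p) * (2*((b:ℚ)-p)+1))
      = ∑ p ∈ range (b + 1), gq b (b - p) := by
        refine Finset.sum_congr rfl fun p hp => ?_
        have hpb : p ≤ b := by
          have := Finset.mem_range.mp hp; omega
        have h1 : b - (b - p) = p := by omega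
        have h2' : ((b:ℚ) - p) = ((b - p : ℕ) : ℚ) := by
          push_cast [hpb]; ring
        rw [gq, h1, h2']
    _ = ∑ p ∈ range (b + 1), gq b p := Finset.sum_range_reflect (gq b) (b+1)
    _ = ∑ p ∈ range (b + 1), (-1:ℚ)^p * (b.choose p) / (2*((p:ℕ)+(0:ℕ))+1) * (1/(b.factorial * 2^b)) := by
        refine Finset.sum_congr rfl fun p hp => ?_
        have hpb : p ≤ b := by
          have := Finset.mem_range.mp hp; omega
        rw [gq, Nat.cast_choose ℚ hpb]
        have hsplit : ((2:ℚ)^b) = 2^(b-p) * 2^p := by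
          rw [← pow_add]; congr 1; omega
        rw [hsplit]
        have hpf : ((p.factorial : ℕ) : ℚ) ≠ 0 := Nat.cast_ne_zero.mpr p.factorial_ne_zero
        have hbpf : (((b-p).factorial : ℕ) : ℚ) ≠ 0 := Nat.cast_ne_zero.mpr (b-p).factorial_ne_zero
        have h2p : ((2:ℚ)^p) ≠ 0 := by positivity
        have h2bp : ((2:ℚ)^(b-p)) ≠ 0 := by positivity
        have hden : (2*((p:ℚ))+1) ≠ 0 := by positivity
        push_cast
        field_simp
        ring
    _ = Sq b 0 * (1/(b.factorial * 2^b)) := by rw [← Finset.sum_mul, Sq]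
    _ = 1 / ((2*b+1).doubleFactorial : ℚ) := by
        have h := Sq_closed b 0
        simp only [Nat.mul_zero, Nat.add_zero, Nat.doubleFactorial] at h
        field_simp at h ⊢
        push_cast at h; linear_combination h

lemma alt_sum (a : ℕ) :
    ∑ j ∈ range (a + 1), (-1:ℚ)^(a-j) / (j.factorial * (a-j).factorial)
    = if a = 0 then 1 else 0 := by
  have hcast : ∑ m ∈ range (a + 1), (-1:ℚ)^m * (a.choose m)
      = if a = 0 then 1 else 0 := by
    have h := @Int.alternating_sum_range_choose a
    have := congrArg (fun z : ℤ => (z : ℚ)) h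
    push_cast at this
    exact this
  have ha : ((a.factorial : ℕ) : ℚ) ≠ 0 := Nat.cast_ne_zero.mpr a.factorial_ne_zero
  have step : ∑ j ∈ range (a + 1), (-1:ℚ)^(a-j) / (j.factorial * (a-j).factorial)
      = (∑ m ∈ range (a + 1), (-1:ℚ)^m * (a.choose m)) * ((-1:ℚ)^a / a.factorial) := by
    rw [Finset.sum_mul]
    refine Finset.sum_congr rfl fun j hj => ?_
    have hja : j ≤ a := by have := Finset.mem_range.mp hj; omega
    rw [Nat.cast_choose ℚ hja]
    have hsgn : (-1:ℚ)^(a-j) = (-1)^j * (-1)^a := by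
      have : (-1:ℚ)^(a-j) * (-1)^j = (-1)^a := by
        rw [← pow_add]; congr 1; omega
      have hj2 : ((-1:ℚ)^j) * ((-1:ℚ)^j) = 1 := by
        rw [← pow_add, ← two_mul, pow_mul]; norm_num
      calc (-1:ℚ)^(a-j) = (-1:ℚ)^(a-j) * ((-1:ℚ)^j * (-1:ℚ)^j) := by rw [hj2, mul_one]
        _ = ((-1:ℚ)^(a-j) * (-1)^j) * (-1)^j := by ring
        _ = (-1)^j * (-1)^a := by rw [this]; ring
    rw [hsgn]
    have hjf : ((j.factorial : ℕ) : ℚ) ≠ 0 := Nat.cast_ne_zero.mpr j.factorial_ne_zero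
    have hajf : (((a-j).factorial : ℕ) : ℚ) ≠ 0 := Nat.cast_ne_zero.mpr (a-j).factorial_ne_zero
    field_simp
  rw [step, hcast]
  by_cases h : a = 0
  · subst h; norm_num
  · simp [h]

noncomputable def fq (j p : ℕ) : ℚ := 1 / (j.factorial * p.factorial * 2^p)
noncomputable def dq (i r : ℕ) : ℚ :=
  (-1)^(i+r+1) / (i.factorial * r.factorial * 2^r * (2*(r:ℚ)+1))

/-- Expansion of `alphaP`. -/
lemma alpha_eq (m : ℕ) :
    alphaP m = ∑ i ∈ range (m + 1), C (dq i (m - i)) * (xP ^ i * yP ^ (2 * (m - i) + 1)) := by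
  rw [alphaP]
  refine Finset.sum_congr rfl fun i hi => ?_
  have him : i ≤ m := by have := Finset.mem_range.mp hi; omega
  rw [smul_eq_C_mul]
  have hexp : 2 * m - 2 * i + 1 = 2 * (m - i) + 1 := by omega
  rw [hexp]
  congr 1
  rw [dq]
  have h1 : (-1:ℚ) ^ (m + 1) = (-1:ℚ) ^ (i + (m - i) + 1) := by
    congr 1; omega
  have h2 : (2:ℚ) * m - 2 * i + 1 = 2 * ((m - i : ℕ) : ℚ) + 1 := by
    push_cast [him]; ring
  rw [h1, h2]
  ring_nf

/-- Expansion of the exponential-type power. -/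
lemma pow_eq (n : ℕ) :
    C ((1:ℚ)/n.factorial) * (xP + C ((1:ℚ)/2) * yP ^ 2) ^ n
      = ∑ j ∈ range (n + 1), C (fq j (n - j)) * (xP ^ j * yP ^ (2 * (n - j))) := by
  rw [add_pow, Finset.mul_sum]
  refine Finset.sum_congr rfl fun j hj => ?_
  have hjn : j ≤ n := by have := Finset.mem_range.mp hj; omega
  rw [mul_pow, ← C_pow, ← pow_mul, ← C_eq_coe_nat]
  rw [fq, Nat.cast_choose ℚ hjn]
  have hjf : ((j.factorial : ℕ) : ℚ) ≠ 0 := Nat.cast_ne_zero.mpr j.factorial_ne_zero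
  have hnjf : (((n-j).factorial : ℕ) : ℚ) ≠ 0 := Nat.cast_ne_zero.mpr (n-j).factorial_ne_zero
  have hnf : ((n.factorial : ℕ) : ℚ) ≠ 0 := Nat.cast_ne_zero.mpr n.factorial_ne_zero
  have hsc : (1:ℚ)/n.factorial * ((1:ℚ)/2)^(n-j) * (n.factorial / (j.factorial * (n-j).factorial))
      = 1 / (j.factorial * (n-j).factorial * 2^(n-j)) := by
    rw [div_pow]
    field_simp
    ring
  rw [← hsc, C_mul, C_mul]
  ring

noncomputable def GP (j p i r : ℕ) : MvPolynomial (Fin 2) ℚ :=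
  C (fq j p * dq i r) * (xP ^ (j + i) * yP ^ (2 * (p + r) + 1))

lemma term_eq (k n : ℕ) :
    C ((1:ℚ)/n.factorial) * ((xP + C ((1:ℚ)/2) * yP ^ 2) ^ n * alphaP (k - n))
      = ∑ j ∈ range (n + 1), ∑ i ∈ range (k - n + 1), GP j (n - j) i (k - n - i) := by
  rw [← mul_assoc, pow_eq, alpha_eq, Finset.sum_mul_sum]
  refine Finset.sum_congr rfl fun j hj => Finset.sum_congr rfl fun i hi => ?_
  rw [GP, C_mul]
  have h : 2 * ((n - j) + (k - n - i)) + 1 = 2 * (n - j) + (2 * (k - n - i) + 1) := by ring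
  rw [h, pow_add, pow_add]
  ring

lemma reindex (k : ℕ) (G : ℕ → ℕ → ℕ → ℕ → MvPolynomial (Fin 2) ℚ) :
    ∑ n ∈ range (k+1), ∑ j ∈ range (n+1), ∑ i ∈ range (k-n+1), G j (n-j) i (k-n-i)
  = ∑ a ∈ range (k+1), ∑ j ∈ range (a+1), ∑ p ∈ range (k-a+1), G j p (a-j) (k-a-p) := by
  have lhs_eq :
      ∑ n ∈ range (k+1), ∑ j ∈ range (n+1), ∑ i ∈ range (k-n+1), G j (n-j) i (k-n-i)
    = ∑ x ∈ (range (k+1)).sigma (fun n => (range (n+1)).sigma fun _ => range (k-n+1)),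
        G x.2.1 (x.1 - x.2.1) x.2.2 (k - x.1 - x.2.2) := by
    rw [Finset.sum_sigma]
    refine Finset.sum_congr rfl fun n _ => ?_
    rw [Finset.sum_sigma]
  have rhs_eq :
      ∑ a ∈ range (k+1), ∑ j ∈ range (a+1), ∑ p ∈ range (k-a+1), G j p (a-j) (k-a-p)
    = ∑ y ∈ (range (k+1)).sigma (fun a => (range (a+1)).sigma fun _ => range (k-a+1)),
        G y.2.1 y.2.2 (y.1 - y.2.1) (k - y.1 - y.2.2) := by
    rw [Finset.sum_sigma]
    refine Finset.sum_congr rfl fun a _ => ?_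
    rw [Finset.sum_sigma]
  rw [lhs_eq, rhs_eq]
  refine Finset.sum_nbij' (fun x => ⟨x.2.1 + x.2.2, x.2.1, x.1 - x.2.1⟩)
    (fun y => ⟨y.2.1 + y.2.2, y.2.1, y.1 - y.2.1⟩) ?_ ?_ ?_ ?_ ?_
  · rintro ⟨n, j, i⟩ hx
    simp only [Finset.mem_sigma, Finset.mem_range] at hx ⊢
    omega
  · rintro ⟨a, j, p⟩ hy
    simp only [Finset.mem_sigma, Finset.mem_range] at hy ⊢
    omega
  · rintro ⟨n, j, i⟩ hx
    simp only [Finset.mem_sigma, Finset.mem_range] at hx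
    have e1 : j + i - j = i := by omega
    have e2 : j + (n - j) = n := by omega
    simp only [e1, e2]
  · rintro ⟨a, j, p⟩ hy
    simp only [Finset.mem_sigma, Finset.mem_range] at hy
    have e1 : j + p - j = p := by omega
    have e2 : j + (a - j) = a := by omega
    simp only [e1, e2]
  · rintro ⟨n, j, i⟩ hx
    simp only [Finset.mem_sigma, Finset.mem_range] at hx
    have e1 : (j + i) - j = i := by omega
    have e2 : k - (j + i) - (n - j) = k - n - i := by omega
    simp only [e1, e2]

lemma inner_eq (k a : ℕ) (ha : a ≤ k) :
    ∑ j ∈ range (a+1), ∑ p ∈ range (k-a+1), GP j p (a-j) (k-a-p)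
      = C (if a = 0 then (-1:ℚ)/((2*k+1).doubleFactorial : ℚ) else 0)
        * (xP ^ a * yP ^ (2*(k-a)+1)) := by
  obtain ⟨b, hb⟩ : ∃ b, k - a = b := ⟨k - a, rfl⟩
  rw [hb]
  set u : ℕ → ℚ := fun j => (-1:ℚ)^(a-j) / (j.factorial * (a-j).factorial) with hu
  set v : ℕ → ℚ := fun p =>
    -((-1:ℚ)^(b-p) / (p.factorial * 2^p * (b-p).factorial * 2^(b-p) * (2*((b:ℚ)-p)+1))) with hv
  have step1 : ∑ j ∈ range (a+1), ∑ p ∈ range (b+1), GP j p (a-j) (b-p)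
      = ∑ j ∈ range (a+1), ∑ p ∈ range (b+1), C (u j * v p) * (xP ^ a * yP ^ (2*b+1)) := by
    refine Finset.sum_congr rfl fun j hj => Finset.sum_congr rfl fun p hp => ?_
    have hja : j ≤ a := by have := Finset.mem_range.mp hj; omega
    have hpb : p ≤ b := by have := Finset.mem_range.mp hp; omega
    have e1 : j + (a - j) = a := by omega
    have e2 : p + (b - p) = b := by omega
    rw [GP, e1, e2]
    congr 1
    rw [fq, dq, hu, hv]
    have hc : ((b:ℚ) - p) = ((b - p : ℕ) : ℚ) := by push_cast [hpb]; ring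
    have hsgn : (-1:ℚ)^((a-j) + (b-p) + 1) = -((-1:ℚ)^(a-j) * (-1:ℚ)^(b-p)) := by
      rw [pow_succ, pow_add]; ring
    simp only [hsgn, hc]
    congr 1
    have n1 : ((j.factorial : ℕ) : ℚ) ≠ 0 := Nat.cast_ne_zero.mpr j.factorial_ne_zero
    have n2 : ((p.factorial : ℕ) : ℚ) ≠ 0 := Nat.cast_ne_zero.mpr p.factorial_ne_zero
    have n3 : (((a-j).factorial : ℕ) : ℚ) ≠ 0 := Nat.cast_ne_zero.mpr (a-j).factorial_ne_zero
    have n4 : (((b-p).factorial : ℕ) : ℚ) ≠ 0 := Nat.cast_ne_zero.mpr (b-p).factorial_ne_zero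
    have n5 : ((2:ℚ)^p) ≠ 0 := by positivity
    have n6 : ((2:ℚ)^(b-p)) ≠ 0 := by positivity
    have n7 : (2*(((b-p):ℕ):ℚ)+1) ≠ 0 := by positivity
    field_simp
  have step2 :
      ∑ j ∈ range (a+1), ∑ p ∈ range (b+1), C (u j * v p) * (xP ^ a * yP ^ (2*b+1))
      = C ((∑ j ∈ range (a+1), u j) * (∑ p ∈ range (b+1), v p)) * (xP ^ a * yP ^ (2*b+1)) := by
    rw [Finset.sum_mul_sum, map_sum, Finset.sum_mul]
    refine Finset.sum_congr rfl fun j _ => ?_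
    rw [map_sum, Finset.sum_mul]
  have hus : (∑ j ∈ range (a+1), u j) = if a = 0 then 1 else 0 := alt_sum a
  have hvs : (∑ p ∈ range (b+1), v p) = -(1 / ((2*b+1).doubleFactorial : ℚ)) := by
    rw [hv, Finset.sum_neg_distrib, key_sum b]
  rw [step1, step2, hus, hvs]
  have hsc : ((if a = 0 then (1:ℚ) else 0) * -(1 / ((2*b+1).doubleFactorial : ℚ)))
      = (if a = 0 then (-1:ℚ)/((2*k+1).doubleFactorial : ℚ) else 0) := by
    by_cases h0 : a = 0
    · subst h0
      have hbk : b = k := by omega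
      subst hbk
      simp [neg_div]
    · simp [h0]
  rw [hsc]


/-- For every natural number `k`,
`Σ_{n=0}^{k} (1/n!) (x + y²/2)^n α_{k−n} = − y^{2k+1}/(2k+1)!!` in `ℚ[x,y]`. -/
theorem stmt1 (k : ℕ) :
    ∑ n ∈ Finset.range (k + 1),
      ((1 : ℚ) / n.factorial) • ((xP + ((1 : ℚ) / 2) • yP ^ 2) ^ n * alphaP (k - n))
    = -(((1 : ℚ) / (2 * k + 1).doubleFactorial) • yP ^ (2 * k + 1)) := by
  simp only [smul_eq_C_mul]
  calc
    ∑ n ∈ range (k + 1),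
        C ((1:ℚ)/n.factorial) * ((xP + C ((1:ℚ)/2) * yP ^ 2) ^ n * alphaP (k - n))
      = ∑ n ∈ range (k + 1), ∑ j ∈ range (n + 1), ∑ i ∈ range (k - n + 1),
          GP j (n - j) i (k - n - i) :=
        Finset.sum_congr rfl fun n _ => term_eq k n
    _ = ∑ a ∈ range (k + 1), ∑ j ∈ range (a + 1), ∑ p ∈ range (k - a + 1),
          GP j p (a - j) (k - a - p) := reindex k GP
    _ = ∑ a ∈ range (k + 1),
          C (if a = 0 then (-1:ℚ)/((2*k+1).doubleFactorial : ℚ) else 0)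
            * (xP ^ a * yP ^ (2*(k-a)+1)) := by
        refine Finset.sum_congr rfl fun a ha => ?_
        exact inner_eq k a (by have := Finset.mem_range.mp ha; omega)
    _ = C ((-1:ℚ)/((2*k+1).doubleFactorial : ℚ)) * (xP ^ 0 * yP ^ (2*(k-0)+1)) := by
        refine Finset.sum_eq_single_of_mem 0 (Finset.mem_range.mpr (by omega)) ?_ |>.trans ?_
        · intro b _ hb
          rw [if_neg hb, map_zero, zero_mul]
        · rw [if_pos rfl]
    _ = -(C ((1:ℚ)/((2 * k + 1).doubleFactorial : ℚ)) * yP ^ (2 * k + 1)) := by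
        rw [pow_zero, one_mul, neg_div, map_neg, neg_mul]
        norm_num
end

section
/- For every k ≥ 0, the identity s_k = Σ_{n≥0} Σ_{i=0}^{n} ((−1)^{n+1} v^i r^{2n−2i+1}/(2^{n−i} i! (n−i)! (2n−2i+1))) I_{n+k+1} + Σ_{n≥0} ((−1)^n/n!) (v + r²/2)^n J_{n+k} holds in R (the series on the right converges in the coefficientwise topology on R). -/
open Finset

/-- The ring `R` of formal power series over `ℚ` in the variables
`t_0, t_1, …` (indexed by `Sum.inl`) and `s_0, s_1, …` (indexed by `Sum.inr`). -/
abbrev RBKdV : Type := MvPowerSeries (ℕ ⊕ ℕ) ℚ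

/-- The coefficientwise (product of discrete) topology on `R`. -/
noncomputable instance : TopologicalSpace RBKdV :=
  @Pi.topologicalSpace ((ℕ ⊕ ℕ) →₀ ℕ) (fun _ => ℚ) (fun _ => ⊥)

/-- The variable `t_k`. -/
noncomputable def tV (k : ℕ) : RBKdV := MvPowerSeries.X (Sum.inl k)
/-- The variable `s_k`. -/
noncomputable def sV (k : ℕ) : RBKdV := MvPowerSeries.X (Sum.inr k)

/-! ### Auxiliary infrastructure -/

/-- Total degree of a monomial exponent. -/
def degg (d : (ℕ⊕ℕ) →₀ ℕ) : ℕ := d.sum fun _ n => n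

lemma degg_add (a b : (ℕ⊕ℕ) →₀ ℕ) : degg (a+b) = degg a + degg b :=
  Finsupp.sum_add_index' (fun _ => rfl) (fun _ _ _ => rfl)

lemma degg_eq_zero {a : (ℕ⊕ℕ) →₀ ℕ} (h : degg a = 0) : a = 0 := by
  ext x
  by_contra hx
  have hx' : x ∈ a.support := Finsupp.mem_support_iff.2 (by simpa using hx)
  have : a x ≤ degg a := Finset.single_le_sum (f := fun i => a i) (fun _ _ => Nat.zero_le _) hx'
  have h2 : (0 : (ℕ⊕ℕ) →₀ ℕ) x = 0 := rfl
  omega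

/-- `f` has order at least `n`. -/
def Ordg (n : ℕ) (f : RBKdV) : Prop := ∀ e, degg e < n → MvPowerSeries.coeff e f = 0

lemma ordg_mono {m n : ℕ} (h : m ≤ n) {f : RBKdV} (hf : Ordg n f) : Ordg m f :=
  fun e he => hf e (lt_of_lt_of_le he h)

lemma ordg_of_constantCoeff {f : RBKdV} (h : MvPowerSeries.constantCoeff f = 0) :
    Ordg 1 f := by
  intro e he
  have : e = 0 := degg_eq_zero (by omega)
  subst this
  simpa [MvPowerSeries.coeff_zero_eq_constantCoeff] using h

lemma ordg_mul {a b : ℕ} {f g : RBKdV} (hf : Ordg a f) (hg : Ordg b g) : Ordg (a+b) (f*g) := by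
  intro e he
  rw [MvPowerSeries.coeff_mul]
  apply Finset.sum_eq_zero
  rintro ⟨e1, e2⟩ hp
  rw [Finset.HasAntidiagonal.mem_antidiagonal] at hp
  have hd : degg e1 + degg e2 = degg e := by rw [← degg_add, hp]
  rcases lt_or_ge (degg e1) a with h1 | h1
  · rw [hf e1 h1, zero_mul]
  · rw [hg e2 (by omega), mul_zero]

lemma ordg_pow {f : RBKdV} (hf : Ordg 1 f) (n : ℕ) : Ordg n (f^n) := by
  induction n with
  | zero => exact fun e he => absurd he (by omega)
  | succ m ih => rw [pow_succ]; exact ordg_mul ih hf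

lemma ordg_smul {n : ℕ} {f : RBKdV} (c : ℚ) (hf : Ordg n f) : Ordg n (c • f) := by
  intro e he
  rw [MvPowerSeries.coeff_smul, hf e he, mul_zero]

lemma ordg_sum {n : ℕ} {ι : Type*} {s : Finset ι} {F : ι → RBKdV}
    (h : ∀ i ∈ s, Ordg n (F i)) : Ordg n (∑ i ∈ s, F i) := by
  intro e he
  rw [map_sum]
  exact Finset.sum_eq_zero fun i hi => h i hi e he

lemma ordg_add {n : ℕ} {f g : RBKdV} (hf : Ordg n f) (hg : Ordg n g) : Ordg n (f + g) := by
  intro e he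
  rw [map_add, hf e he, hg e he, add_zero]

lemma ordg_mul_left {n : ℕ} (f : RBKdV) {g : RBKdV} (hg : Ordg n g) : Ordg n (f * g) := by
  have := ordg_mul (a := 0) (f := f) (fun e he => absurd he (by omega)) hg
  simpa using this

lemma ordg_mul_right {n : ℕ} {f : RBKdV} (hf : Ordg n f) (g : RBKdV) : Ordg n (f * g) := by
  have := ordg_mul (b := 0) (g := g) hf (fun e he => absurd he (by omega))
  simpa using this

/-! ### Discrete summability helpers -/

lemma discrete_unique {f : ℕ → ℚ} {a b : ℚ}
    (h1 : @HasSum ℚ ℕ _ ⊥ f a (SummationFilter.unconditional ℕ)) (h2 : @HasSum ℚ ℕ _ ⊥ f b (SummationFilter.unconditional ℕ)) : a = b := by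
  letI : TopologicalSpace ℚ := ⊥
  haveI : DiscreteTopology ℚ := ⟨rfl⟩
  exact h1.unique h2

lemma coeff_eq_sum_of_hasSum {g : ℕ → RBKdV} {S : RBKdV} (h : HasSum g S)
    (e : (ℕ⊕ℕ) →₀ ℕ) (B : ℕ)
    (hvan : ∀ n, B ≤ n → MvPowerSeries.coeff e (g n) = 0) :
    MvPowerSeries.coeff e S = ∑ n ∈ range B, MvPowerSeries.coeff e (g n) := by
  have h1 := (@Pi.hasSum ((ℕ⊕ℕ)→₀ℕ) ℕ (fun _ => ℚ) _ (fun _ => ⊥) _ g S).1 h e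
  have h2 : @HasSum ℚ ℕ _ ⊥ (fun n => MvPowerSeries.coeff e (g n))
      (∑ n ∈ range B, MvPowerSeries.coeff e (g n)) (SummationFilter.unconditional ℕ) :=
    @hasSum_sum_of_ne_finset_zero ℚ ℕ _ ⊥ _ _ _ (fun n hn => hvan n (by simpa using hn)) _
  exact discrete_unique h1 h2

/-! ### Scalar combinatorial identities -/

lemma Usum (N : ℕ) : ∑ p ∈ antidiagonal N, ((-1:ℚ))^p.1 / (p.1.factorial * p.2.factorial)
    = if N = 0 then 1 else 0 := by
  rw [Finset.Nat.sum_antidiagonal_eq_sum_range_succ_mk]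
  have key : ∀ k ∈ range (N+1), ((-1:ℚ))^k / (k.factorial * (N-k).factorial)
      = ((-1:ℚ))^k * (N.choose k) / N.factorial := by
    intro k hk
    rw [mem_range] at hk
    have h := Nat.choose_mul_factorial_mul_factorial (show k ≤ N by omega)
    have h2 : (N.choose k : ℚ) * k.factorial * (N-k).factorial = N.factorial := by
      exact_mod_cast congrArg (fun z : ℕ => (z : ℚ)) h
    have hk1 : (k.factorial : ℚ) ≠ 0 := Nat.cast_ne_zero.2 k.factorial_ne_zero
    have hk2 : ((N-k).factorial : ℚ) ≠ 0 := Nat.cast_ne_zero.2 (N-k).factorial_ne_zero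
    have hk3 : (N.factorial : ℚ) ≠ 0 := Nat.cast_ne_zero.2 N.factorial_ne_zero
    field_simp
    linear_combination -h2
  rw [Finset.sum_congr rfl key]
  have : ∑ k ∈ range (N+1), ((-1:ℚ))^k * (N.choose k) / N.factorial
      = (∑ k ∈ range (N+1), ((-1:ℚ))^k * (N.choose k)) / N.factorial := by
    rw [Finset.sum_div]
  rw [this]
  have h3 : (∑ k ∈ range (N+1), ((-1:ℚ))^k * (N.choose k)) = if N = 0 then 1 else 0 := by
    have := @Int.alternating_sum_range_choose N
    have := congrArg (fun z : ℤ => (z : ℚ)) this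
    push_cast at this
    rw [this]
  rw [h3]
  split <;> simp_all [Nat.factorial]

/-- One summand of the double-factorial sum. -/
noncomputable def Vterm (p : ℕ × ℕ) : ℚ :=
  ((-1:ℚ))^p.1 / (2^p.1 * p.1.factorial * (2*p.2+1).doubleFactorial)

lemma Vkey : ∀ j : ℕ, ((2*j+1 : ℕ) : ℚ) * ∑ p ∈ antidiagonal j, Vterm p
    = (-1)^j / (2^j * j.factorial) := by
  intro j
  rw [Finset.mul_sum]
  have hsplit : ∀ p ∈ antidiagonal j, ((2*j+1 : ℕ) : ℚ) * Vterm p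
      = (2*p.1 : ℕ) * Vterm p + ((2*p.2+1 : ℕ)) * Vterm p := by
    intro p hp
    rw [Finset.HasAntidiagonal.mem_antidiagonal] at hp
    have : ((2*j+1 : ℕ) : ℚ) = ((2*p.1 : ℕ) : ℚ) + ((2*p.2+1 : ℕ) : ℚ) := by
      push_cast; subst hp; push_cast; ring
    rw [this, add_mul]
  rw [Finset.sum_congr rfl hsplit, Finset.sum_add_distrib]
  cases j with
  | zero =>
    simp [Vterm, Nat.doubleFactorial]
  | succ jj =>
    have h1 : ∑ p ∈ antidiagonal (jj+1), ((2*p.1 : ℕ) : ℚ) * Vterm p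
        = - ∑ p ∈ antidiagonal jj, Vterm p := by
      rw [Nat.antidiagonal_succ, Finset.sum_cons, Finset.sum_map]
      simp only [Function.Embedding.coe_prodMap, Function.Embedding.coeFn_mk,
        Function.Embedding.refl_apply, Prod.map]
      rw [show ((2*(0:ℕ)) : ℕ) = 0 from rfl]
      push_cast
      rw [zero_mul, zero_add, ← Finset.sum_neg_distrib]
      apply Finset.sum_congr rfl
      intro p hp
      simp only [Vterm, Nat.succ_eq_add_one]
      have hf : ((p.1+1).factorial : ℚ) = (p.1+1) * p.1.factorial := by
        rw [Nat.factorial_succ]; push_cast; ring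
      have hp1 : (p.1.factorial : ℚ) ≠ 0 := Nat.cast_ne_zero.2 p.1.factorial_ne_zero
      have hdd : (((2*p.2+1).doubleFactorial : ℕ) : ℚ) ≠ 0 := Nat.cast_ne_zero.2 (by positivity)
      have h2 : ((2:ℚ))^(p.1+1) = 2 * 2^p.1 := by ring
      rw [hf, h2]
      field_simp
      ring
    have h2 : ∑ p ∈ antidiagonal (jj+1), ((2*p.2+1 : ℕ) : ℚ) * Vterm p
        = (-1)^(jj+1) / (2^(jj+1) * (jj+1).factorial) + ∑ p ∈ antidiagonal jj, Vterm p := by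
      rw [Nat.antidiagonal_succ', Finset.sum_cons, Finset.sum_map]
      simp only [Function.Embedding.coe_prodMap, Function.Embedding.coeFn_mk,
        Function.Embedding.refl_apply, Prod.map]
      congr 1
      · simp [Vterm, Nat.doubleFactorial]
      · apply Finset.sum_congr rfl
        intro p hp
        simp only [Vterm, Nat.succ_eq_add_one]
        have hdd : (2*(p.2+1)+1).doubleFactorial = (2*p.2+3) * (2*p.2+1).doubleFactorial := by
          rw [show 2*(p.2+1)+1 = (2*p.2+1)+2 by ring, Nat.doubleFactorial_add_two]
        rw [hdd]
        have hdd2 : (((2*p.2+1).doubleFactorial : ℕ) : ℚ) ≠ 0 := Nat.cast_ne_zero.2 (by positivity)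
        have hp1 : (p.1.factorial : ℚ) ≠ 0 := Nat.cast_ne_zero.2 p.1.factorial_ne_zero
        push_cast
        field_simp
        ring
    rw [h1, h2]
    ring

lemma Vsum (j : ℕ) : ∑ p ∈ antidiagonal j, Vterm p
    = (-1)^j / (2^j * j.factorial * (2*j+1)) := by
  have h := Vkey j
  have hne : ((2*j+1 : ℕ) : ℚ) ≠ 0 := Nat.cast_ne_zero.2 (by omega)
  have hj : (j.factorial : ℚ) ≠ 0 := Nat.cast_ne_zero.2 j.factorial_ne_zero
  have h2 : ((2:ℚ))^j ≠ 0 := by positivity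
  field_simp at h ⊢
  push_cast at h; linear_combination h

noncomputable def Uterm (q : ℕ × ℕ) : ℚ := ((-1:ℚ))^q.1 / (q.1.factorial * q.2.factorial)

/-! ### Reindexing lemmas -/

lemma tri {M : Type*} [AddCommMonoid M] (N : ℕ) (f : ℕ → ℕ → ℕ → M) :
    ∑ p ∈ antidiagonal N, ∑ q ∈ antidiagonal p.1, f q.1 q.2 p.2
    = ∑ p ∈ antidiagonal N, ∑ q ∈ antidiagonal p.1, f q.1 p.2 q.2 := by
  rw [Finset.sum_sigma' (antidiagonal N) (fun p => antidiagonal p.1)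
    (fun p q => f q.1 q.2 p.2)]
  rw [Finset.sum_sigma' (antidiagonal N) (fun p => antidiagonal p.1)
    (fun p q => f q.1 p.2 q.2)]
  refine Finset.sum_nbij' (fun x => ⟨(x.2.1 + x.1.2, x.2.2), (x.2.1, x.1.2)⟩)
    (fun x => ⟨(x.2.1 + x.1.2, x.2.2), (x.2.1, x.1.2)⟩) ?_ ?_ ?_ ?_ ?_
  · rintro ⟨⟨n, m⟩, ⟨i, j⟩⟩ h
    simp only [Finset.mem_sigma, Finset.HasAntidiagonal.mem_antidiagonal, and_true, true_and] at h ⊢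
    omega
  · rintro ⟨⟨a, j⟩, ⟨i, m⟩⟩ h
    simp only [Finset.mem_sigma, Finset.HasAntidiagonal.mem_antidiagonal, and_true, true_and] at h ⊢
    omega
  · rintro ⟨⟨n, m⟩, ⟨i, j⟩⟩ h
    simp only [Finset.mem_sigma, Finset.HasAntidiagonal.mem_antidiagonal] at h
    simp only [Sigma.mk.inj_iff, Prod.mk.injEq, heq_eq_eq, and_true, true_and]
    omega
  · rintro ⟨⟨a, j⟩, ⟨i, m⟩⟩ h
    simp only [Finset.mem_sigma, Finset.HasAntidiagonal.mem_antidiagonal] at h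
    simp only [Sigma.mk.inj_iff, Prod.mk.injEq, heq_eq_eq, and_true, true_and]
    omega
  · rintro ⟨⟨n, m⟩, ⟨i, j⟩⟩ h
    rfl

lemma quad {M : Type*} [AddCommMonoid M] (N : ℕ) (f : ℕ → ℕ → ℕ → ℕ → M) :
    ∑ p ∈ antidiagonal N, ∑ q ∈ antidiagonal p.1, ∑ t ∈ antidiagonal p.2, f q.1 q.2 t.1 t.2
    = ∑ p ∈ antidiagonal N, ∑ q ∈ antidiagonal p.1, ∑ t ∈ antidiagonal p.2,
        f q.1 t.1 q.2 t.2 := by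
  have conv1 : ∀ (g : ℕ → ℕ → ℕ → ℕ → M) (p : ℕ × ℕ),
      (∑ q ∈ antidiagonal p.1, ∑ t ∈ antidiagonal p.2, g q.1 q.2 t.1 t.2)
      = ∑ z ∈ (antidiagonal p.1) ×ˢ (antidiagonal p.2), g z.1.1 z.1.2 z.2.1 z.2.2 := by
    intro g p
    rw [Finset.sum_product]
  rw [Finset.sum_congr rfl (fun p _ => conv1 (fun a b c d => f a b c d) p)]
  rw [Finset.sum_congr rfl (fun p _ => conv1 (fun a b c d => f a c b d) p)]
  rw [Finset.sum_sigma' (antidiagonal N)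
    (fun p => antidiagonal p.1 ×ˢ antidiagonal p.2) (fun p z => f z.1.1 z.1.2 z.2.1 z.2.2)]
  rw [Finset.sum_sigma' (antidiagonal N)
    (fun p => antidiagonal p.1 ×ˢ antidiagonal p.2) (fun p z => f z.1.1 z.2.1 z.1.2 z.2.2)]
  refine Finset.sum_nbij'
    (fun x => ⟨(x.2.1.1 + x.2.2.1, x.2.1.2 + x.2.2.2), ((x.2.1.1, x.2.2.1), (x.2.1.2, x.2.2.2))⟩)
    (fun x => ⟨(x.2.1.1 + x.2.2.1, x.2.1.2 + x.2.2.2), ((x.2.1.1, x.2.2.1), (x.2.1.2, x.2.2.2))⟩)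
    ?_ ?_ ?_ ?_ ?_
  · rintro ⟨⟨n, m⟩, ⟨⟨a, b⟩, ⟨c, d⟩⟩⟩ h
    simp only [Finset.mem_sigma, Finset.mem_product, Finset.HasAntidiagonal.mem_antidiagonal, and_true,
      true_and] at h ⊢
    omega
  · rintro ⟨⟨n, m⟩, ⟨⟨a, b⟩, ⟨c, d⟩⟩⟩ h
    simp only [Finset.mem_sigma, Finset.mem_product, Finset.HasAntidiagonal.mem_antidiagonal, and_true,
      true_and] at h ⊢
    omega
  · rintro ⟨⟨n, m⟩, ⟨⟨a, b⟩, ⟨c, d⟩⟩⟩ h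
    simp only [Finset.mem_sigma, Finset.mem_product, Finset.HasAntidiagonal.mem_antidiagonal] at h
    simp only [Sigma.mk.inj_iff, Prod.mk.injEq, heq_eq_eq, and_true, true_and]
    omega
  · rintro ⟨⟨n, m⟩, ⟨⟨a, b⟩, ⟨c, d⟩⟩⟩ h
    simp only [Finset.mem_sigma, Finset.mem_product, Finset.HasAntidiagonal.mem_antidiagonal] at h
    simp only [Sigma.mk.inj_iff, Prod.mk.injEq, heq_eq_eq, and_true, true_and]
    omega
  · rintro ⟨⟨n, m⟩, ⟨⟨a, b⟩, ⟨c, d⟩⟩⟩ h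
    rfl

/-! ### Expansions into antidiagonal sums -/

lemma Cn_eq (v r : RBKdV) (n : ℕ) :
    (∑ i ∈ range (n+1), ((-1:ℚ)^(n+1) /
        (2^(n-i) * i.factorial * (n-i).factorial * (2*n-2*i+1))) • (v^i * r^(2*n-2*i+1)))
    = ∑ q ∈ antidiagonal n, ((-1:ℚ)^(q.1+q.2+1) /
        (2^q.2 * q.1.factorial * q.2.factorial * (2*q.2+1))) • (v^q.1 * r^(2*q.2+1)) := by
  rw [Finset.Nat.sum_antidiagonal_eq_sum_range_succ_mk]
  apply Finset.sum_congr rfl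
  intro i hi
  rw [mem_range] at hi
  have e1 : 2*n-2*i+1 = 2*(n-i)+1 := by omega
  have e2 : i + (n-i) + 1 = n + 1 := by omega
  rw [e1, e2]
  have e3 : (2*(n:ℚ) - 2*(i:ℚ) + 1) = 2*((n-i : ℕ) : ℚ) + 1 := by
    rw [Nat.cast_sub (by omega : i ≤ n)]; ring
  rw [e3]

lemma An_eq (v r : RBKdV) (m : ℕ) :
    (∑ i ∈ range (m+1), ((1:ℚ) /
        (i.factorial * (2*m-2*i+1).doubleFactorial)) • (v^i * r^(2*m-2*i+1)))
    = ∑ q ∈ antidiagonal m, ((1:ℚ) /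
        (q.1.factorial * (2*q.2+1).doubleFactorial)) • (v^q.1 * r^(2*q.2+1)) := by
  rw [Finset.Nat.sum_antidiagonal_eq_sum_range_succ_mk]
  apply Finset.sum_congr rfl
  intro i hi
  rw [mem_range] at hi
  have e1 : 2*m-2*i+1 = 2*(m-i)+1 := by omega
  rw [e1]

lemma wpow (v r : RBKdV) (n : ℕ) :
    (v + ((1:ℚ)/2) • r^2)^n
    = ∑ q ∈ antidiagonal n, (((q.1+q.2).choose q.1 : ℚ) / 2^q.2) • (v^q.1 * r^(2*q.2)) := by
  rw [add_pow, Finset.Nat.sum_antidiagonal_eq_sum_range_succ_mk]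
  apply Finset.sum_congr rfl
  intro i hi
  rw [mem_range] at hi
  rw [smul_pow, ← pow_mul]
  have hc : ((n.choose i : ℕ) : RBKdV) = ((n.choose i : ℚ)) • (1 : RBKdV) := by
    rw [Nat.cast_smul_eq_nsmul]
    simp
  rw [hc, show i + (n-i) = n by omega]
  simp only [smul_mul_assoc, mul_smul_comm, smul_smul, mul_one]
  congr 1
  rw [div_pow]
  field_simp
  simp

/-! ### The key algebraic identity -/

lemma TN (v r : RBKdV) (N : ℕ) :
    ∑ p ∈ antidiagonal N,
      (((1:ℚ)/p.2.factorial) •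
        ((∑ i ∈ range (p.1+1), ((-1:ℚ)^(p.1+1) /
            (2^(p.1-i) * i.factorial * (p.1-i).factorial * (2*p.1-2*i+1))) •
          (v^i * r^(2*p.1-2*i+1))) * v^p.2)
      + ((-1:ℚ)^p.1 / p.1.factorial) •
        ((v + ((1:ℚ)/2) • r^2)^p.1 *
          ∑ i ∈ range (p.2+1), ((1:ℚ)/(i.factorial * (2*p.2-2*i+1).doubleFactorial)) •
            (v^i * r^(2*p.2-2*i+1)))) = 0 := by
  have step1 : ∀ p ∈ antidiagonal N,
      (((1:ℚ)/p.2.factorial) •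
        ((∑ i ∈ range (p.1+1), ((-1:ℚ)^(p.1+1) /
            (2^(p.1-i) * i.factorial * (p.1-i).factorial * (2*p.1-2*i+1))) •
          (v^i * r^(2*p.1-2*i+1))) * v^p.2))
      = ∑ q ∈ antidiagonal p.1,
          (((1:ℚ)/p.2.factorial) * ((-1:ℚ)^(q.1+q.2+1) /
            (2^q.2 * q.1.factorial * q.2.factorial * (2*q.2+1)))) •
          ((v^q.1 * r^(2*q.2+1)) * v^p.2) := by
    intro p _
    rw [Cn_eq, Finset.sum_mul, Finset.smul_sum]
    apply Finset.sum_congr rfl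
    intro q _
    rw [smul_mul_assoc, smul_smul]
  have step2 : ∀ p ∈ antidiagonal N,
      (((-1:ℚ)^p.1 / p.1.factorial) •
        ((v + ((1:ℚ)/2) • r^2)^p.1 *
          ∑ i ∈ range (p.2+1), ((1:ℚ)/(i.factorial * (2*p.2-2*i+1).doubleFactorial)) •
            (v^i * r^(2*p.2-2*i+1))))
      = ∑ q ∈ antidiagonal p.1, ∑ t ∈ antidiagonal p.2,
          (((-1:ℚ)^(q.1+q.2) / (q.1+q.2).factorial) *
            (((q.1+q.2).choose q.1 : ℚ) / 2^q.2) *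
            ((1:ℚ)/(t.1.factorial * (2*t.2+1).doubleFactorial))) •
          ((v^q.1 * r^(2*q.2)) * (v^t.1 * r^(2*t.2+1))) := by
    intro p _
    rw [An_eq, wpow, Finset.sum_mul_sum, Finset.smul_sum]
    apply Finset.sum_congr rfl
    intro q hq
    rw [Finset.smul_sum]
    apply Finset.sum_congr rfl
    intro t _
    rw [Finset.HasAntidiagonal.mem_antidiagonal] at hq
    rw [hq]
    rw [smul_mul_assoc, mul_smul_comm, smul_smul, smul_smul]
  rw [Finset.sum_congr rfl (fun p hp => congrArg₂ (·+·) (step1 p hp) (step2 p hp))]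
  rw [Finset.sum_add_distrib]
  rw [tri N (fun i j m => (((1:ℚ)/m.factorial) * ((-1:ℚ)^(i+j+1) /
        (2^j * i.factorial * j.factorial * (2*(j:ℚ)+1)))) •
          ((v^i * r^(2*j+1)) * v^m))]
  rw [quad N (fun a b i m => (((-1:ℚ)^(a+b) / (a+b).factorial) *
            (((a+b).choose a : ℚ) / 2^b) *
            ((1:ℚ)/(i.factorial * (2*m+1).doubleFactorial))) •
          ((v^a * r^(2*b)) * (v^i * r^(2*m+1))))]
  rw [← Finset.sum_add_distrib]
  apply Finset.sum_eq_zero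
  rintro ⟨a, j⟩ _
  simp only
  have f1 : ∑ q ∈ antidiagonal a,
      (((1:ℚ)/q.2.factorial) * ((-1:ℚ)^(q.1+j+1) /
        (2^j * q.1.factorial * j.factorial * (2*(j:ℚ)+1)))) •
          ((v^q.1 * r^(2*j+1)) * v^q.2)
      = (((-1:ℚ)^(j+1) / (2^j * j.factorial * (2*(j:ℚ)+1))) * ∑ q ∈ antidiagonal a, Uterm q) •
          (v^a * r^(2*j+1)) := by
    rw [Finset.mul_sum, Finset.sum_smul]
    apply Finset.sum_congr rfl
    intro q hq
    rw [Finset.HasAntidiagonal.mem_antidiagonal] at hq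
    have hmon : (v^q.1 * r^(2*j+1)) * v^q.2 = v^a * r^(2*j+1) := by
      rw [← hq, pow_add]; ring
    rw [hmon, Uterm]
    congr 1
    have h1 : (q.1.factorial : ℚ) ≠ 0 := Nat.cast_ne_zero.2 q.1.factorial_ne_zero
    have h2 : (q.2.factorial : ℚ) ≠ 0 := Nat.cast_ne_zero.2 q.2.factorial_ne_zero
    have h3 : (j.factorial : ℚ) ≠ 0 := Nat.cast_ne_zero.2 j.factorial_ne_zero
    have h4 : (2*(j:ℚ)+1) ≠ 0 := by positivity
    have h5 : ((2:ℚ))^j ≠ 0 := by positivity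
    field_simp
    ring
  have f2 : ∑ q ∈ antidiagonal a, ∑ t ∈ antidiagonal j,
      (((-1:ℚ)^(q.1+t.1) / (q.1+t.1).factorial) *
            (((q.1+t.1).choose q.1 : ℚ) / 2^t.1) *
            ((1:ℚ)/(q.2.factorial * (2*t.2+1).doubleFactorial))) •
          ((v^q.1 * r^(2*t.1)) * (v^q.2 * r^(2*t.2+1)))
      = ((∑ q ∈ antidiagonal a, Uterm q) * ∑ t ∈ antidiagonal j, Vterm t) •
          (v^a * r^(2*j+1)) := by
    rw [Finset.sum_mul_sum, Finset.sum_smul]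
    apply Finset.sum_congr rfl
    intro q hq
    rw [Finset.sum_smul, Finset.HasAntidiagonal.mem_antidiagonal] at *
    apply Finset.sum_congr rfl
    intro t ht
    rw [Finset.HasAntidiagonal.mem_antidiagonal] at ht
    have hmon : (v^q.1 * r^(2*t.1)) * (v^q.2 * r^(2*t.2+1)) = v^a * r^(2*j+1) := by
      rw [← hq, ← ht, pow_add, pow_add, show 2*(t.1+t.2)+1 = 2*t.1 + (2*t.2+1) by ring, pow_add]
      ring
    rw [hmon, Uterm, Vterm]
    congr 1
    have hch : ((q.1+t.1).choose q.1 : ℚ) * q.1.factorial * t.1.factorial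
        = (q.1+t.1).factorial := by
      have hnat := Nat.choose_mul_factorial_mul_factorial (Nat.le_add_right q.1 t.1)
      rw [Nat.add_sub_cancel_left] at hnat
      exact_mod_cast congrArg (fun z : ℕ => (z : ℚ)) hnat
    have h1 : (q.1.factorial : ℚ) ≠ 0 := Nat.cast_ne_zero.2 q.1.factorial_ne_zero
    have h2 : (q.2.factorial : ℚ) ≠ 0 := Nat.cast_ne_zero.2 q.2.factorial_ne_zero
    have h3 : (t.1.factorial : ℚ) ≠ 0 := Nat.cast_ne_zero.2 t.1.factorial_ne_zero
    have h6 : ((q.1+t.1).factorial : ℚ) ≠ 0 := Nat.cast_ne_zero.2 (q.1+t.1).factorial_ne_zero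
    have h4 : (((2*t.2+1).doubleFactorial : ℕ) : ℚ) ≠ 0 := Nat.cast_ne_zero.2 (by positivity)
    have h5 : ((2:ℚ))^t.1 ≠ 0 := by positivity
    field_simp
    linear_combination (-1:ℚ)^(q.1+t.1) * hch
  rw [f1, f2, ← add_smul, Vsum]
  have : ((-1:ℚ)^(j+1) / (2^j * j.factorial * (2*(j:ℚ)+1))) * (∑ q ∈ antidiagonal a, Uterm q)
      + (∑ q ∈ antidiagonal a, Uterm q) * ((-1:ℚ)^j / (2^j * j.factorial * (2*(j:ℚ)+1))) = 0 := by
    ring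
  rw [this, zero_smul]

/-! ### Named pieces -/

noncomputable def CnD (v r : RBKdV) (n : ℕ) : RBKdV :=
  ∑ i ∈ Finset.range (n + 1),
    ((-1 : ℚ) ^ (n + 1) /
        (2 ^ (n - i) * i.factorial * (n - i).factorial * (2 * n - 2 * i + 1))) •
      (v ^ i * r ^ (2 * n - 2 * i + 1))

noncomputable def AnD (v r : RBKdV) (m : ℕ) : RBKdV :=
  ∑ i ∈ Finset.range (m + 1),
    ((1 : ℚ) / (i.factorial * (2 * m - 2 * i + 1).doubleFactorial)) •
      (v ^ i * r ^ (2 * m - 2 * i + 1))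

noncomputable def wD (v r : RBKdV) : RBKdV := v + ((1 : ℚ) / 2) • r ^ 2

lemma TN' (v r : RBKdV) (N : ℕ) :
    ∑ p ∈ antidiagonal N,
      (((1:ℚ)/p.2.factorial) • (CnD v r p.1 * v^p.2)
      + ((-1:ℚ)^p.1 / p.1.factorial) • (wD v r ^ p.1 * AnD v r p.2)) = 0 :=
  TN v r N

lemma Usum' (N : ℕ) : ∑ p ∈ antidiagonal N, Uterm p = if N = 0 then 1 else 0 :=
  Usum N

lemma ordg_CnD {v r : RBKdV} (hv1 : Ordg 1 v) (hr1 : Ordg 1 r) (n : ℕ) :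
    Ordg (n+1) (CnD v r n) := by
  apply ordg_sum
  intro i hi
  rw [mem_range] at hi
  exact ordg_smul _ (ordg_mono (by omega) (ordg_mul (ordg_pow hv1 i) (ordg_pow hr1 _)))

lemma ordg_AnD {v r : RBKdV} (hv1 : Ordg 1 v) (hr1 : Ordg 1 r) (m : ℕ) :
    Ordg (m+1) (AnD v r m) := by
  apply ordg_sum
  intro i hi
  rw [mem_range] at hi
  exact ordg_smul _ (ordg_mono (by omega) (ordg_mul (ordg_pow hv1 i) (ordg_pow hr1 _)))

lemma smulC (a : ℚ) (f : RBKdV) : a • f = MvPowerSeries.C a * f := by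
  rw [Algebra.smul_def]; rfl

lemma coeff_mul_congr {d : (ℕ⊕ℕ) →₀ ℕ} (Z : RBKdV) {X Y : RBKdV}
    (h : ∀ e, degg e ≤ degg d → MvPowerSeries.coeff e X = MvPowerSeries.coeff e Y) :
    MvPowerSeries.coeff d (Z * X) = MvPowerSeries.coeff d (Z * Y) := by
  rw [MvPowerSeries.coeff_mul, MvPowerSeries.coeff_mul]
  apply Finset.sum_congr rfl
  intro p hp
  rw [Finset.HasAntidiagonal.mem_antidiagonal] at hp
  have : degg p.2 ≤ degg d := by
    rw [← hp, degg_add]; omega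
  rw [h p.2 this]

/-- Let `v, r ∈ R` have zero constant term, and let
`I_k = Σ_{n≥0} t_{n+k} v^n/n!` and
`J_k = Σ_{n≥0} t_{n+k+1} Σ_{i=0}^{n} v^i r^{2n−2i+1}/(i!(2n−2i+1)!!)
      + Σ_{n≥0} (s_{n+k}/n!)(v+r²/2)^n`,
the sums converging in the coefficientwise topology.
If `I_0 = v` and `J_0 = r`, then for every `k ≥ 0` the identity
`s_k = Σ_{n≥0} Σ_{i=0}^{n} ((−1)^{n+1} v^i r^{2n−2i+1}/(2^{n−i} i! (n−i)! (2n−2i+1))) I_{n+k+1}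
     + Σ_{n≥0} ((−1)^n/n!) (v + r²/2)^n J_{n+k}` holds in `R`, the series on the
right converging in the coefficientwise topology. -/
theorem stmt3 (v r : RBKdV)
    (hv : MvPowerSeries.constantCoeff (σ := ℕ ⊕ ℕ) (R := ℚ) v = 0)
    (hr : MvPowerSeries.constantCoeff (σ := ℕ ⊕ ℕ) (R := ℚ) r = 0)
    (I J : ℕ → RBKdV)
    (hI : ∀ k, HasSum (fun n : ℕ => ((1 : ℚ) / n.factorial) • (tV (n + k) * v ^ n)) (I k))
    (hJ : ∀ k, HasSum (fun n : ℕ =>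
        tV (n + k + 1) *
          ∑ i ∈ Finset.range (n + 1),
            ((1 : ℚ) / (i.factorial * (2 * n - 2 * i + 1).doubleFactorial)) •
              (v ^ i * r ^ (2 * n - 2 * i + 1)) +
        ((1 : ℚ) / n.factorial) • (sV (n + k) * (v + ((1 : ℚ) / 2) • r ^ 2) ^ n)) (J k))
    (hI0 : I 0 = v) (hJ0 : J 0 = r) (k : ℕ) :
    HasSum (fun n : ℕ =>
      (∑ i ∈ Finset.range (n + 1),
        ((-1 : ℚ) ^ (n + 1) /
            (2 ^ (n - i) * i.factorial * (n - i).factorial * (2 * n - 2 * i + 1))) •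
          (v ^ i * r ^ (2 * n - 2 * i + 1))) * I (n + k + 1) +
      ((-1 : ℚ) ^ n / n.factorial) • ((v + ((1 : ℚ) / 2) • r ^ 2) ^ n * J (n + k)))
      (sV k) := by
  classical
  have hv1 : Ordg 1 v := ordg_of_constantCoeff hv
  have hr1 : Ordg 1 r := ordg_of_constantCoeff hr
  have hw0 : MvPowerSeries.constantCoeff (σ := ℕ⊕ℕ) (R := ℚ) (wD v r) = 0 := by
    unfold wD
    rw [map_add, hv, smulC, map_mul, map_pow, hr]
    norm_num
  have hw1 : Ordg 1 (wD v r) := ordg_of_constantCoeff hw0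
  have htV : ∀ j, Ordg 1 (tV j) := fun j => ordg_of_constantCoeff (MvPowerSeries.constantCoeff_X _)
  have hJ' : ∀ j, HasSum (fun m : ℕ =>
      tV (m + j + 1) * AnD v r m +
        ((1 : ℚ) / m.factorial) • (sV (m + j) * wD v r ^ m)) (J j) := hJ
  show HasSum (fun n : ℕ =>
      CnD v r n * I (n + k + 1) +
      ((-1 : ℚ) ^ n / n.factorial) • (wD v r ^ n * J (n + k))) (sV k)
  refine (@Pi.hasSum ((ℕ⊕ℕ)→₀ℕ) ℕ (fun _ => ℚ) _ (fun _ => ⊥) _ _ _).2 (fun d => ?_)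
  set B := degg d + 1 with hBdef
  -- truncations of I and J
  have hIeq : ∀ j e, degg e ≤ degg d →
      MvPowerSeries.coeff e (I j)
      = MvPowerSeries.coeff e
          (∑ m ∈ range B, ((1:ℚ)/m.factorial) • (tV (m+j) * v^m)) := by
    intro j e he
    rw [map_sum]
    apply coeff_eq_sum_of_hasSum (hI j) e B
    intro m hm
    exact (ordg_smul _ (ordg_mul_left _ (ordg_pow hv1 m))) e (by omega)
  have hJeq : ∀ j e, degg e ≤ degg d →
      MvPowerSeries.coeff e (J j)
      = MvPowerSeries.coeff e
          (∑ m ∈ range B, (tV (m+j+1) * AnD v r m +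
            ((1:ℚ)/m.factorial) • (sV (m+j) * wD v r ^ m))) := by
    intro j e he
    rw [map_sum]
    apply coeff_eq_sum_of_hasSum (hJ' j) e B
    intro m hm
    have h1 : Ordg m (tV (m+j+1) * AnD v r m) :=
      ordg_mul_left _ (ordg_mono (by omega) (ordg_AnD hv1 hr1 m))
    have h2 : Ordg m (((1:ℚ)/m.factorial) • (sV (m+j) * wD v r ^ m)) :=
      ordg_smul _ (ordg_mul_left _ (ordg_pow hw1 m))
    exact (ordg_add h1 h2) e (by omega)
  -- vanishing of the target terms beyond B
  have hvan : ∀ n, B ≤ n → MvPowerSeries.coeff d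
      (CnD v r n * I (n+k+1) + ((-1:ℚ)^n / n.factorial) • (wD v r ^ n * J (n+k))) = 0 := by
    intro n hn
    rw [map_add]
    have h1 : Ordg (n+1) (CnD v r n * I (n+k+1)) :=
      ordg_mul_right (ordg_CnD hv1 hr1 n) _
    have h2 : Ordg n (((-1:ℚ)^n / n.factorial) • (wD v r ^ n * J (n+k))) :=
      ordg_smul _ (ordg_mul_right (ordg_pow hw1 n) _)
    rw [h1 d (by omega), h2 d (by omega), add_zero]
  -- the grand finite computation
  have hsum : ∑ n ∈ range B, MvPowerSeries.coeff d
      (CnD v r n * I (n+k+1) + ((-1:ℚ)^n / n.factorial) • (wD v r ^ n * J (n+k)))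
      = MvPowerSeries.coeff d (sV k) := by
    -- replace I, J by their truncations
    have step0 : ∀ n ∈ range B, MvPowerSeries.coeff d
        (CnD v r n * I (n+k+1) + ((-1:ℚ)^n / n.factorial) • (wD v r ^ n * J (n+k)))
        = MvPowerSeries.coeff d
          (CnD v r n * (∑ m ∈ range B, ((1:ℚ)/m.factorial) • (tV (m+(n+k+1)) * v^m)) +
           ((-1:ℚ)^n / n.factorial) • (wD v r ^ n *
             ∑ m ∈ range B, (tV (m+(n+k)+1) * AnD v r m +
               ((1:ℚ)/m.factorial) • (sV (m+(n+k)) * wD v r ^ m)))) := by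
      intro n _
      rw [map_add, map_add]
      congr 1
      · exact coeff_mul_congr _ (hIeq (n+k+1))
      · rw [MvPowerSeries.coeff_smul, MvPowerSeries.coeff_smul]
        congr 1
        exact coeff_mul_congr _ (hJeq (n+k))
    rw [Finset.sum_congr rfl step0, ← map_sum]
    -- now a purely algebraic identity in RBKdV
    have keyalg : ∑ n ∈ range B,
        (CnD v r n * (∑ m ∈ range B, ((1:ℚ)/m.factorial) • (tV (m+(n+k+1)) * v^m)) +
         ((-1:ℚ)^n / n.factorial) • (wD v r ^ n *
           ∑ m ∈ range B, (tV (m+(n+k)+1) * AnD v r m +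
             ((1:ℚ)/m.factorial) • (sV (m+(n+k)) * wD v r ^ m))))
        = sV k + ∑ p ∈ (range B ×ˢ range B).filter (fun p => ¬ (p.1 + p.2 < B)),
            (tV (p.1+p.2+k+1) * (((1:ℚ)/p.2.factorial) • (CnD v r p.1 * v^p.2)
              + ((-1:ℚ)^p.1 / p.1.factorial) • (wD v r ^ p.1 * AnD v r p.2))
             + Uterm p • (sV (p.1+p.2+k) * wD v r ^ (p.1+p.2))) := by
      have expand : ∀ n ∈ range B,
          (CnD v r n * (∑ m ∈ range B, ((1:ℚ)/m.factorial) • (tV (m+(n+k+1)) * v^m)) +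
           ((-1:ℚ)^n / n.factorial) • (wD v r ^ n *
             ∑ m ∈ range B, (tV (m+(n+k)+1) * AnD v r m +
               ((1:ℚ)/m.factorial) • (sV (m+(n+k)) * wD v r ^ m))))
          = ∑ m ∈ range B,
            (tV (n+m+k+1) * (((1:ℚ)/m.factorial) • (CnD v r n * v^m)
              + ((-1:ℚ)^n / n.factorial) • (wD v r ^ n * AnD v r m))
             + Uterm (n, m) • (sV (n+m+k) * wD v r ^ (n+m))) := by
        intro n _
        rw [Finset.mul_sum, Finset.mul_sum, Finset.smul_sum, ← Finset.sum_add_distrib]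
        apply Finset.sum_congr rfl
        intro m _
        rw [show m+(n+k+1) = n+m+k+1 by omega, show m+(n+k)+1 = n+m+k+1 by omega,
            show m+(n+k) = n+m+k by omega]
        have hU : Uterm (n, m) = ((-1:ℚ)^n / n.factorial) * ((1:ℚ)/m.factorial) := by
          unfold Uterm
          rw [div_mul_div_comm, mul_one]
        rw [hU, pow_add]
        simp only [smulC, map_mul]
        ring
      rw [Finset.sum_congr rfl expand]
      rw [← Finset.sum_product']
      rw [← Finset.sum_filter_add_sum_filter_not (range B ×ˢ range B)
        (fun p => p.1 + p.2 < B)]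
      congr 1
      -- the triangle part equals sV k
      have htri : (range B ×ˢ range B).filter (fun p => p.1 + p.2 < B)
          = (range B).biUnion (fun N => antidiagonal N) := by
        ext p
        simp only [Finset.mem_filter, Finset.mem_product, Finset.mem_biUnion,
          Finset.HasAntidiagonal.mem_antidiagonal, Finset.mem_range]
        constructor
        · rintro ⟨⟨h1, h2⟩, h3⟩; exact ⟨p.1+p.2, h3, rfl⟩
        · rintro ⟨N, hN, rfl⟩; omega
      rw [htri, Finset.sum_biUnion]
      · have hNdiag : ∀ N ∈ range B,
            (∑ p ∈ antidiagonal N,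
              (tV (p.1+p.2+k+1) * (((1:ℚ)/p.2.factorial) • (CnD v r p.1 * v^p.2)
                + ((-1:ℚ)^p.1 / p.1.factorial) • (wD v r ^ p.1 * AnD v r p.2))
               + Uterm p • (sV (p.1+p.2+k) * wD v r ^ (p.1+p.2))))
            = (if N = 0 then (1:ℚ) else 0) • (sV (N+k) * wD v r ^ N) := by
          intro N _
          have hGsplit : ∀ p ∈ antidiagonal N,
              (tV (p.1+p.2+k+1) * (((1:ℚ)/p.2.factorial) • (CnD v r p.1 * v^p.2)
                + ((-1:ℚ)^p.1 / p.1.factorial) • (wD v r ^ p.1 * AnD v r p.2))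
               + Uterm p • (sV (p.1+p.2+k) * wD v r ^ (p.1+p.2)))
              = tV (N+k+1) * (((1:ℚ)/p.2.factorial) • (CnD v r p.1 * v^p.2)
                + ((-1:ℚ)^p.1 / p.1.factorial) • (wD v r ^ p.1 * AnD v r p.2))
               + Uterm p • (sV (N+k) * wD v r ^ N) := by
            intro p hp
            rw [Finset.HasAntidiagonal.mem_antidiagonal] at hp
            rw [hp]
          rw [Finset.sum_congr rfl hGsplit, Finset.sum_add_distrib, ← Finset.mul_sum,
            TN' v r N, mul_zero, zero_add, ← Finset.sum_smul, Usum']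
        rw [Finset.sum_congr rfl hNdiag]
        rw [Finset.sum_eq_single 0]
        · simp
        · intro b _ hb
          rw [if_neg hb, zero_smul]
        · intro h
          exact absurd (Finset.mem_range.2 (by omega)) h
      · intro x _ y _ hxy
        apply Finset.disjoint_left.2
        intro p hp hp'
        rw [Finset.HasAntidiagonal.mem_antidiagonal] at hp hp'
        exact hxy (by omega)
    rw [keyalg, map_add]
    have hrest : MvPowerSeries.coeff d
        (∑ p ∈ (range B ×ˢ range B).filter (fun p => ¬ (p.1 + p.2 < B)),
          (tV (p.1+p.2+k+1) * (((1:ℚ)/p.2.factorial) • (CnD v r p.1 * v^p.2)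
            + ((-1:ℚ)^p.1 / p.1.factorial) • (wD v r ^ p.1 * AnD v r p.2))
           + Uterm p • (sV (p.1+p.2+k) * wD v r ^ (p.1+p.2)))) = 0 := by
      rw [map_sum]
      apply Finset.sum_eq_zero
      rintro ⟨n, m⟩ hp
      simp only [Finset.mem_filter, Finset.mem_product, Finset.mem_range, not_lt] at hp
      obtain ⟨⟨-, -⟩, hge⟩ := hp
      have h1 : Ordg (n+m) (tV (n+m+k+1) * (((1:ℚ)/m.factorial) • (CnD v r n * v^m)
          + ((-1:ℚ)^n / n.factorial) • (wD v r ^ n * AnD v r m))) := by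
        apply ordg_mul_left
        apply ordg_add
        · exact ordg_smul _ (ordg_mono (by omega) (ordg_mul (ordg_CnD hv1 hr1 n) (ordg_pow hv1 m)))
        · exact ordg_smul _ (ordg_mono (by omega) (ordg_mul (ordg_pow hw1 n) (ordg_AnD hv1 hr1 m)))
      have h2 : Ordg (n+m) (Uterm (n, m) • (sV (n+m+k) * wD v r ^ (n+m))) :=
        ordg_smul _ (ordg_mul_left _ (ordg_pow hw1 (n+m)))
      rw [map_add, h1 d (by omega), h2 d (by omega), add_zero]
    rw [hrest, add_zero]
  have hfin := @hasSum_sum_of_ne_finset_zero ℚ ℕ _ ⊥ (SummationFilter.unconditional ℕ)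
    (fun n => MvPowerSeries.coeff d
      (CnD v r n * I (n+k+1) + ((-1:ℚ)^n / n.factorial) • (wD v r ^ n * J (n+k))))
    (range B) (fun n hn => hvan n (by simpa using hn)) _
  rw [hsum] at hfin
  exact hfin
end

section
/- For every k ≥ 1 there exists a family of polynomials c_{d,λ,μ}(z,y) ∈ Q[z,y], indexed by integers d with 1 ≤ d ≤ k and pairs of partitions (λ, μ) with |λ| + |μ| = k − d, such that each c_{d,λ,μ} is homogeneous of degree k + ℓ(λ) + ℓ(μ) + 1 in (z,y), and such that in K: J_k = Σ_{d=1}^{k} Σ_{(λ,μ), |λ|+|μ|=k−d} c_{d,λ,μ}(v_1^{−1}, u_1^{−1}) · r_d · Π_{i=1}^{ℓ(λ)} v_{λ_i+1} · Π_{j=1}^{ℓ(μ)} u_{μ_j+1}, where u_1 := v_1 + r_0 r_1 and u_{j+1} := ∂(u_j) for j ≥ 1, and ℓ denotes the number of parts of a partition. -/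
open Finset

/-- The field `K`: field of fractions of `ℚ[v_0, r_0, v_1, r_1, …]`. -/
abbrev KBKdV : Type := FractionRing (MvPolynomial (ℕ ⊕ ℕ) ℚ)

/-- The indeterminate `v_k`, viewed in `K`. -/
noncomputable def vK (k : ℕ) : KBKdV :=
  algebraMap (MvPolynomial (ℕ ⊕ ℕ) ℚ) KBKdV (MvPolynomial.X (Sum.inl k))

/-- The indeterminate `r_k`, viewed in `K`. -/
noncomputable def rK (k : ℕ) : KBKdV :=
  algebraMap (MvPolynomial (ℕ ⊕ ℕ) ℚ) KBKdV (MvPolynomial.X (Sum.inr k))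

lemma vK_ne (k : ℕ) : vK k ≠ 0 := by
  rw [vK, Ne, IsFractionRing.to_map_eq_zero_iff]
  exact MvPolynomial.X_ne_zero _

lemma yden_ne : vK 1 + rK 0 * rK 1 ≠ 0 := by
  have h : vK 1 + rK 0 * rK 1 = algebraMap (MvPolynomial (ℕ ⊕ ℕ) ℚ) KBKdV
      (MvPolynomial.X (Sum.inl 1) + MvPolynomial.X (Sum.inr 0) * MvPolynomial.X (Sum.inr 1)) := by
    simp [vK, rK, map_add, map_mul]
  rw [h, Ne, IsFractionRing.to_map_eq_zero_iff]
  intro hc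
  have := congrArg (MvPolynomial.eval fun _ => (1:ℚ)) hc
  simp at this

noncomputable def zB : KBKdV := (vK 1)⁻¹
noncomputable def yB : KBKdV := (vK 1 + rK 0 * rK 1)⁻¹
noncomputable def PvM (m : Multiset ℕ) : KBKdV := (m.map fun p => vK (p + 1)).prod
noncomputable def PuM (u : ℕ → KBKdV) (m : Multiset ℕ) : KBKdV := (m.map fun p => u (p + 1)).prod

structure TD where
  q : ℚ
  e0 : ℕ
  e1 : ℕ
  d : ℕ
  m1 : Multiset ℕ
  m2 : Multiset ℕ

def TD.Good (k : ℕ) (t : TD) : Prop :=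
  1 ≤ t.d ∧ t.d ≤ k ∧ (∀ p ∈ t.m1, 0 < p) ∧ (∀ p ∈ t.m2, 0 < p) ∧
    t.d + t.m1.sum + t.m2.sum = k ∧
    t.e0 + t.e1 = k + Multiset.card t.m1 + Multiset.card t.m2 + 1

noncomputable def qC (q : ℚ) : KBKdV := algebraMap ℚ KBKdV q

noncomputable def TD.val (u : ℕ → KBKdV) (t : TD) : KBKdV :=
  qC t.q * (zB ^ t.e0 * yB ^ t.e1 * rK t.d * PvM t.m1 * PuM u t.m2)

def RepM (u : ℕ → KBKdV) (k : ℕ) (x : KBKdV) : Prop :=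
  ∃ L : List TD, (∀ t ∈ L, t.Good k) ∧ x = (L.map (TD.val u)).sum

lemma repM_zero (u : ℕ → KBKdV) (k : ℕ) : RepM u k 0 := ⟨[], by simp, by simp⟩

lemma repM_congr {u k x y} (h : RepM u k x) (hxy : x = y) : RepM u k y := hxy ▸ h

lemma repM_add {u k x y} (hx : RepM u k x) (hy : RepM u k y) : RepM u k (x + y) := by
  obtain ⟨L1, h1, e1⟩ := hx; obtain ⟨L2, h2, e2⟩ := hy
  exact ⟨L1 ++ L2, by intro t ht; rcases List.mem_append.mp ht with h | h; exacts [h1 t h, h2 t h],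
    by simp [e1, e2]⟩

lemma repM_single {u k} (t : TD) (h : t.Good k) : RepM u k (t.val u) :=
  ⟨[t], by simpa using h, by simp⟩

lemma repM_neg {u k x} (hx : RepM u k x) : RepM u k (-x) := by
  obtain ⟨L, h, e⟩ := hx
  refine ⟨L.map (fun t => ⟨-t.q, t.e0, t.e1, t.d, t.m1, t.m2⟩), ?_, ?_⟩
  · intro t ht
    obtain ⟨s, hs, rfl⟩ := List.mem_map.mp ht
    exact h s hs
  · subst e
    induction L with
    | nil => simp
    | cons a L ih =>
      simp only [List.map_cons, List.sum_cons, neg_add, TD.val, qC, map_neg, neg_mul]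
      rw [ih (fun t ht => h t (List.mem_cons_of_mem _ ht))]

lemma repM_listsum {u k} {α : Type} (L : List α) (f : α → KBKdV)
    (h : ∀ a ∈ L, RepM u k (f a)) : RepM u k ((L.map f).sum) := by
  induction L with
  | nil => simpa using repM_zero u k
  | cons a L ih =>
    simp only [List.map_cons, List.sum_cons]
    exact repM_add (h a (by simp)) (ih fun b hb => h b (List.mem_cons_of_mem _ hb))

section Dxlemmas
variable (Dx : Derivation ℚ KBKdV KBKdV)

lemma dx_zB (hDxv : ∀ k, Dx (vK k) = vK (k + 1)) : Dx zB = -(zB ^ 2) * vK 2 := by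
  rw [zB, Derivation.leibniz_inv, hDxv 1]
  rw [smul_eq_mul]

lemma dx_yB (u : ℕ → KBKdV) (hu1 : u 1 = vK 1 + rK 0 * rK 1)
    (hu : ∀ j : ℕ, 1 ≤ j → u (j + 1) = Dx (u j)) : Dx yB = -(yB ^ 2) * u 2 := by
  have h2 : u 2 = Dx (vK 1 + rK 0 * rK 1) := by rw [hu 1 le_rfl, hu1]
  rw [yB, Derivation.leibniz_inv, ← h2, smul_eq_mul]

lemma dx_PvM (hDxv : ∀ k, Dx (vK k) = vK (k + 1)) (m : Multiset ℕ) :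
    ∃ L : List (Multiset ℕ), Dx (PvM m) = (L.map PvM).sum ∧
      ∀ m' ∈ L, m'.sum = m.sum + 1 ∧ Multiset.card m' = Multiset.card m ∧
        ((∀ p ∈ m, 0 < p) → ∀ p ∈ m', 0 < p) := by
  induction m using Multiset.induction_on with
  | empty => exact ⟨[], by simp [PvM], by simp⟩
  | cons p m ih =>
    obtain ⟨L, hL, hLp⟩ := ih
    refine ⟨((p + 1) ::ₘ m) :: L.map (fun m' => p ::ₘ m'), ?_, ?_⟩
    · have hc : PvM (p ::ₘ m) = vK (p + 1) * PvM m := by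
        simp [PvM, Multiset.map_cons, Multiset.prod_cons]
      rw [hc, Derivation.leibniz, smul_eq_mul, smul_eq_mul, hL, hDxv]
      have hmap : ((L.map (fun m' => p ::ₘ m')).map PvM).sum = vK (p + 1) * (L.map PvM).sum := by
        rw [List.map_map]
        have : (PvM ∘ fun m' => p ::ₘ m') = fun m' => vK (p + 1) * PvM m' := by
          funext m'; simp [Function.comp, PvM, Multiset.map_cons, Multiset.prod_cons]
        rw [this, List.sum_map_mul_left]
      simp only [List.map_cons, List.sum_cons, hmap]
      have hc2 : PvM ((p + 1) ::ₘ m) = vK (p + 2) * PvM m := by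
        simp [PvM, Multiset.map_cons, Multiset.prod_cons]
      rw [hc2]
      ring
    · intro m' hm'
      rcases List.mem_cons.mp hm' with rfl | hm'
      · refine ⟨by simp [Multiset.sum_cons]; ring, by simp, ?_⟩
        intro hpos p' hp'
        rcases Multiset.mem_cons.mp hp' with rfl | hp'
        · omega
        · exact hpos p' (Multiset.mem_cons_of_mem hp')
      · obtain ⟨m'', hm'', rfl⟩ := List.mem_map.mp hm'
        obtain ⟨hs, hc, hp⟩ := hLp m'' hm''
        refine ⟨by simp [Multiset.sum_cons, hs]; ring, by simp [hc], ?_⟩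
        intro hpos p' hp'
        rcases Multiset.mem_cons.mp hp' with rfl | hp'
        · exact hpos p' (Multiset.mem_cons_self _ _)
        · exact hp (fun q hq => hpos q (Multiset.mem_cons_of_mem hq)) p' hp'

lemma dx_PuM (u : ℕ → KBKdV) (hu : ∀ j : ℕ, 1 ≤ j → u (j + 1) = Dx (u j)) (m : Multiset ℕ) :
    ∃ L : List (Multiset ℕ), Dx (PuM u m) = (L.map (PuM u)).sum ∧
      ∀ m' ∈ L, m'.sum = m.sum + 1 ∧ Multiset.card m' = Multiset.card m ∧
        ((∀ p ∈ m, 0 < p) → ∀ p ∈ m', 0 < p) := by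
  induction m using Multiset.induction_on with
  | empty => exact ⟨[], by simp [PuM], by simp⟩
  | cons p m ih =>
    obtain ⟨L, hL, hLp⟩ := ih
    refine ⟨((p + 1) ::ₘ m) :: L.map (fun m' => p ::ₘ m'), ?_, ?_⟩
    · have hc : PuM u (p ::ₘ m) = u (p + 1) * PuM u m := by
        simp [PuM, Multiset.map_cons, Multiset.prod_cons]
      rw [hc, Derivation.leibniz, smul_eq_mul, smul_eq_mul, hL,
        ← hu (p + 1) (Nat.le_add_left 1 p)]
      have hmap : ((L.map (fun m' => p ::ₘ m')).map (PuM u)).sum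
          = u (p + 1) * (L.map (PuM u)).sum := by
        rw [List.map_map]
        have : (PuM u ∘ fun m' => p ::ₘ m') = fun m' => u (p + 1) * PuM u m' := by
          funext m'; simp [Function.comp, PuM, Multiset.map_cons, Multiset.prod_cons]
        rw [this, List.sum_map_mul_left]
      simp only [List.map_cons, List.sum_cons, hmap]
      have hc2 : PuM u ((p + 1) ::ₘ m) = u (p + 2) * PuM u m := by
        simp [PuM, Multiset.map_cons, Multiset.prod_cons]
      rw [hc2]
      ring
    · intro m' hm'
      rcases List.mem_cons.mp hm' with rfl | hm'
      · refine ⟨by simp [Multiset.sum_cons]; ring, by simp, ?_⟩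
        intro hpos p' hp'
        rcases Multiset.mem_cons.mp hp' with rfl | hp'
        · omega
        · exact hpos p' (Multiset.mem_cons_of_mem hp')
      · obtain ⟨m'', hm'', rfl⟩ := List.mem_map.mp hm'
        obtain ⟨hs, hc, hp⟩ := hLp m'' hm''
        refine ⟨by simp [Multiset.sum_cons, hs]; ring, by simp [hc], ?_⟩
        intro hpos p' hp'
        rcases Multiset.mem_cons.mp hp' with rfl | hp'
        · exact hpos p' (Multiset.mem_cons_self _ _)
        · exact hp (fun q hq => hpos q (Multiset.mem_cons_of_mem hq)) p' hp'

end Dxlemmas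

lemma helper_sum {α : Type*} (L : List α) (g : α → KBKdV) (c r y : KBKdV) :
    c * ((L.map g).sum * r * y) = (L.map fun m' => c * (g m' * r * y)).sum := by
  induction L with
  | nil => simp
  | cons a L ih =>
    simp only [List.map_cons, List.sum_cons]
    rw [← ih]
    ring

section Step
variable (Dx : Derivation ℚ KBKdV KBKdV) (u : ℕ → KBKdV)

lemma repM_step (hDxv : ∀ k, Dx (vK k) = vK (k + 1)) (hDxr : ∀ k, Dx (rK k) = rK (k + 1))
    (hu1 : u 1 = vK 1 + rK 0 * rK 1) (hu : ∀ j : ℕ, 1 ≤ j → u (j + 1) = Dx (u j))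
    (k : ℕ) (t : TD) (hg : t.Good k) :
    RepM u (k + 1) (Dx (t.val u) * yB) := by
  obtain ⟨q, e0, e1, d, m1, m2⟩ := t
  obtain ⟨hd1, hdk, h1, h2, hsum, he⟩ := hg
  dsimp only at hd1 hdk h1 h2 hsum he
  obtain ⟨Lv, hLv, hLvP⟩ := dx_PvM Dx hDxv m1
  obtain ⟨Lu, hLu, hLuP⟩ := dx_PuM Dx u hu m2
  have hD : Dx (zB ^ e0 * yB ^ e1 * rK d * PvM m1 * PuM u m2) =
      Dx (zB ^ e0) * (yB ^ e1 * rK d * PvM m1 * PuM u m2)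
      + Dx (yB ^ e1) * (zB ^ e0 * rK d * PvM m1 * PuM u m2)
      + Dx (rK d) * (zB ^ e0 * yB ^ e1 * PvM m1 * PuM u m2)
      + Dx (PvM m1) * (zB ^ e0 * yB ^ e1 * rK d * PuM u m2)
      + Dx (PuM u m2) * (zB ^ e0 * yB ^ e1 * rK d * PvM m1) := by
    simp only [Derivation.leibniz, smul_eq_mul]
    ring
  have hval : Dx (TD.val u ⟨q, e0, e1, d, m1, m2⟩) * yB =
      qC q * (Dx (zB ^ e0) * (yB ^ e1 * rK d * PvM m1 * PuM u m2) * yB)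
      + qC q * (Dx (yB ^ e1) * (zB ^ e0 * rK d * PvM m1 * PuM u m2) * yB)
      + qC q * (Dx (rK d) * (zB ^ e0 * yB ^ e1 * PvM m1 * PuM u m2) * yB)
      + qC q * (Dx (PvM m1) * (zB ^ e0 * yB ^ e1 * rK d * PuM u m2) * yB)
      + qC q * (Dx (PuM u m2) * (zB ^ e0 * yB ^ e1 * rK d * PvM m1) * yB) := by
    rw [TD.val, Derivation.leibniz]
    simp only [qC, Derivation.map_algebraMap, smul_eq_mul, mul_zero, add_zero]
    rw [hD]
    ring
  have P1 : RepM u (k + 1)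
      (qC q * (Dx (zB ^ e0) * (yB ^ e1 * rK d * PvM m1 * PuM u m2) * yB)) := by
    rcases e0 with _ | e
    · simpa [Derivation.map_one_eq_zero] using repM_zero u (k + 1)
    · have hdz : Dx (zB ^ (e + 1)) = qC ((e : ℚ) + 1) * (zB ^ e * (-(zB ^ 2) * vK 2)) := by
        rw [Derivation.leibniz_pow, dx_zB Dx hDxv]
        simp only [qC, nsmul_eq_mul, smul_eq_mul, Nat.add_sub_cancel]
        push_cast
        ring
      refine repM_congr (repM_single (u := u) ⟨-(q * ((e : ℚ) + 1)), e + 2, e1 + 1, d, 1 ::ₘ m1, m2⟩ ?_) ?_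
      · refine ⟨hd1, by dsimp only; omega, ?_, h2, ?_, ?_⟩
        · intro p hp
          rcases Multiset.mem_cons.mp hp with rfl | hp
          · omega
          · exact h1 p hp
        · dsimp only; simp only [Multiset.sum_cons]; omega
        · dsimp only; simp only [Multiset.card_cons]; omega
      · rw [TD.val, hdz]
        have hpv : PvM (1 ::ₘ m1) = vK 2 * PvM m1 := by simp [PvM]
        simp only [hpv, qC, map_neg, map_mul, map_add, map_one]
        push_cast
        ring
  have P2 : RepM u (k + 1)
      (qC q * (Dx (yB ^ e1) * (zB ^ e0 * rK d * PvM m1 * PuM u m2) * yB)) := by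
    rcases e1 with _ | e
    · simpa [Derivation.map_one_eq_zero] using repM_zero u (k + 1)
    · have hdy : Dx (yB ^ (e + 1)) = qC ((e : ℚ) + 1) * (yB ^ e * (-(yB ^ 2) * u 2)) := by
        rw [Derivation.leibniz_pow, dx_yB Dx u hu1 hu]
        simp only [qC, nsmul_eq_mul, smul_eq_mul, Nat.add_sub_cancel]
        push_cast
        ring
      refine repM_congr (repM_single (u := u) ⟨-(q * ((e : ℚ) + 1)), e0, e + 3, d, m1, 1 ::ₘ m2⟩ ?_) ?_
      · refine ⟨hd1, by dsimp only; omega, h1, ?_, ?_, ?_⟩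
        · intro p hp
          rcases Multiset.mem_cons.mp hp with rfl | hp
          · omega
          · exact h2 p hp
        · dsimp only; simp only [Multiset.sum_cons]; omega
        · dsimp only; simp only [Multiset.card_cons]; omega
      · rw [TD.val, hdy]
        have hpu : PuM u (1 ::ₘ m2) = u 2 * PuM u m2 := by simp [PuM]
        simp only [hpu, qC, map_neg, map_mul, map_add, map_one]
        push_cast
        ring
  have P3 : RepM u (k + 1)
      (qC q * (Dx (rK d) * (zB ^ e0 * yB ^ e1 * PvM m1 * PuM u m2) * yB)) := by
    refine repM_congr (repM_single (u := u) ⟨q, e0, e1 + 1, d + 1, m1, m2⟩ ?_) ?_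
    · exact ⟨by dsimp only; omega, by dsimp only; omega, h1, h2, by dsimp only; omega,
        by dsimp only; omega⟩
    · rw [TD.val, hDxr d]
      ring
  have P4 : RepM u (k + 1)
      (qC q * (Dx (PvM m1) * (zB ^ e0 * yB ^ e1 * rK d * PuM u m2) * yB)) := by
    rw [hLv, helper_sum]
    apply repM_listsum
    intro m' hm'
    obtain ⟨hs, hc, hp⟩ := hLvP m' hm'
    refine repM_congr (repM_single (u := u) ⟨q, e0, e1 + 1, d, m', m2⟩ ?_) ?_
    · exact ⟨hd1, by dsimp only; omega, hp h1, h2, by dsimp only; omega,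
        by dsimp only; omega⟩
    · rw [TD.val]
      ring
  have P5 : RepM u (k + 1)
      (qC q * (Dx (PuM u m2) * (zB ^ e0 * yB ^ e1 * rK d * PvM m1) * yB)) := by
    rw [hLu, helper_sum]
    apply repM_listsum
    intro m' hm'
    obtain ⟨hs, hc, hp⟩ := hLuP m' hm'
    refine repM_congr (repM_single (u := u) ⟨q, e0, e1 + 1, d, m1, m'⟩ ?_) ?_
    · exact ⟨hd1, by dsimp only; omega, h1, hp h2, by dsimp only; omega,
        by dsimp only; omega⟩
    · rw [TD.val]
      ring
  rw [hval]
  exact repM_add (repM_add (repM_add (repM_add P1 P2) P3) P4) P5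

end Step

def RepI (k : ℕ) (x : KBKdV) : Prop :=
  ∃ L : List (ℚ × Multiset ℕ), (∀ t ∈ L, (∀ p ∈ t.2, 0 < p) ∧ t.2.sum = k - 1) ∧
    x = (L.map fun t => qC t.1 * (zB ^ (k + Multiset.card t.2) * PvM t.2)).sum

lemma repI_zero (k : ℕ) : RepI k 0 := ⟨[], by simp, by simp⟩

lemma repI_congr {k x y} (h : RepI k x) (hxy : x = y) : RepI k y := hxy ▸ h

lemma repI_add {k x y} (hx : RepI k x) (hy : RepI k y) : RepI k (x + y) := by
  obtain ⟨L1, h1, e1⟩ := hx; obtain ⟨L2, h2, e2⟩ := hy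
  exact ⟨L1 ++ L2, by intro t ht; rcases List.mem_append.mp ht with h | h; exacts [h1 t h, h2 t h],
    by simp [e1, e2]⟩

lemma repI_single (k N : ℕ) (q : ℚ) (m : Multiset ℕ) (hpos : ∀ p ∈ m, 0 < p)
    (hsum : m.sum = k - 1) (hN : N = k + Multiset.card m) :
    RepI k (qC q * (zB ^ N * PvM m)) := by
  subst hN
  exact ⟨[(q, m)], by simpa using ⟨hpos, hsum⟩, by simp⟩

lemma repI_listsum {k} {α : Type*} (L : List α) (f : α → KBKdV)
    (h : ∀ a ∈ L, RepI k (f a)) : RepI k ((L.map f).sum) := by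
  induction L with
  | nil => simpa using repI_zero k
  | cons a L ih =>
    simp only [List.map_cons, List.sum_cons]
    exact repI_add (h a (by simp)) (ih fun b hb => h b (List.mem_cons_of_mem _ hb))

lemma helper_sum2 {α : Type*} (L : List α) (g : α → KBKdV) (c y : KBKdV) :
    c * (L.map g).sum * y = (L.map fun m' => c * g m' * y).sum := by
  induction L with
  | nil => simp
  | cons a L ih =>
    simp only [List.map_cons, List.sum_cons]
    rw [← ih]
    ring

section IJ
variable (Dx : Derivation ℚ KBKdV KBKdV) (u : ℕ → KBKdV)

lemma repI_step (hDxv : ∀ k, Dx (vK k) = vK (k + 1)) (k : ℕ) (hk : 2 ≤ k) (q : ℚ)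
    (m : Multiset ℕ) (hpos : ∀ p ∈ m, 0 < p) (hsum : m.sum = k - 1) :
    RepI (k + 1) (Dx (qC q * (zB ^ (k + Multiset.card m) * PvM m)) * zB) := by
  obtain ⟨Lv, hLv, hLvP⟩ := dx_PvM Dx hDxv m
  obtain ⟨e, he⟩ : ∃ e, k + Multiset.card m = e + 1 := ⟨k + Multiset.card m - 1, by omega⟩
  rw [he]
  have hdz : Dx (zB ^ (e + 1)) = qC ((e : ℚ) + 1) * (zB ^ e * (-(zB ^ 2) * vK 2)) := by
    rw [Derivation.leibniz_pow, dx_zB Dx hDxv]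
    simp only [qC, nsmul_eq_mul, smul_eq_mul, Nat.add_sub_cancel]
    push_cast
    ring
  have hexp : Dx (qC q * (zB ^ (e + 1) * PvM m)) * zB
      = qC (-(q * ((e : ℚ) + 1))) * (zB ^ (e + 3) * (vK 2 * PvM m))
        + qC q * ((Lv.map PvM).sum * zB ^ (e + 2) * 1) := by
    simp only [Derivation.leibniz, smul_eq_mul]
    rw [hdz, hLv]
    simp only [qC, Derivation.map_algebraMap, map_neg, map_mul, map_add, map_one, mul_zero,
      add_zero, zero_mul, mul_one]
    push_cast
    ring
  rw [hexp, helper_sum]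
  refine repI_add (repI_congr (repI_single (k + 1) (e + 3) (-(q * ((e : ℚ) + 1))) (1 ::ₘ m)
    ?_ ?_ ?_) ?_) (repI_listsum Lv _ ?_)
  · intro p hp
    rcases Multiset.mem_cons.mp hp with rfl | hp
    · omega
    · exact hpos p hp
  · simp only [Multiset.sum_cons]; omega
  · simp only [Multiset.card_cons]; omega
  · rw [show PvM (1 ::ₘ m) = vK 2 * PvM m from by simp [PvM]]
  · intro m' hm'
    obtain ⟨hs, hc, hp⟩ := hLvP m' hm'
    refine repI_congr (repI_single (k + 1) (e + 2) q m' (hp hpos) (by omega) (by omega)) (by ring)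

lemma repI_dx_listsum (hDxv : ∀ k, Dx (vK k) = vK (k + 1)) (k : ℕ) (hk : 2 ≤ k)
    (L : List (ℚ × Multiset ℕ)) (hL : ∀ t ∈ L, (∀ p ∈ t.2, 0 < p) ∧ t.2.sum = k - 1) :
    RepI (k + 1)
      (Dx ((L.map fun t => qC t.1 * (zB ^ (k + Multiset.card t.2) * PvM t.2)).sum) * zB) := by
  induction L with
  | nil => simpa using repI_zero (k + 1)
  | cons a L ih =>
    simp only [List.map_cons, List.sum_cons, map_add, add_mul]
    exact repI_add (repI_step Dx hDxv k hk a.1 a.2 (hL a (by simp)).1 (hL a (by simp)).2)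
      (ih fun t ht => hL t (List.mem_cons_of_mem _ ht))

variable (I : ℕ → KBKdV)

lemma I1_eq (hDxv : ∀ k, Dx (vK k) = vK (k + 1)) (hI0 : I 0 = vK 0)
    (hI : ∀ k : ℕ, I (k + 1) = (Dx (I k) - if k = 0 then 1 else 0) / vK 1) :
    I 1 = 1 - zB := by
  have h := hI 0
  rw [hI0, hDxv 0] at h
  norm_num at h
  rw [h, zB]
  field_simp [vK_ne 1]

lemma repI_I (hDxv : ∀ k, Dx (vK k) = vK (k + 1)) (hI0 : I 0 = vK 0)
    (hI : ∀ k : ℕ, I (k + 1) = (Dx (I k) - if k = 0 then 1 else 0) / vK 1) :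
    ∀ k, 2 ≤ k → RepI k (I k) := by
  refine Nat.le_induction ?_ ?_
  · have h2 : I 2 = zB ^ 2 * vK 2 * zB := by
      have h := hI 1
      simp only [one_ne_zero, if_false, sub_zero] at h
      rw [I1_eq Dx I hDxv hI0 hI] at h
      have hD1 : Dx ((1 : KBKdV) - zB) = zB ^ 2 * vK 2 := by
        rw [map_sub, Derivation.map_one_eq_zero, dx_zB Dx hDxv]
        ring
      rw [h, hD1, div_eq_mul_inv, zB]
    refine repI_congr (repI_single 2 3 1 {1} ?_ ?_ ?_) ?_
    · intro p hp; simp at hp; omega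
    · simp
    · simp
    · rw [h2]
      simp only [qC, map_one, one_mul, PvM]
      simp
      ring
  · intro n hn ih
    have hIn1 : I (n + 1) = Dx (I n) * zB := by
      rw [hI n]
      simp only [show n ≠ 0 by omega, if_false, sub_zero]
      rw [div_eq_mul_inv, zB]
    obtain ⟨L, hL, hs⟩ := ih
    rw [hIn1, hs]
    exact repI_dx_listsum Dx hDxv n hn L hL

lemma repM_rI (hDxv : ∀ k, Dx (vK k) = vK (k + 1)) (hI0 : I 0 = vK 0)
    (hI : ∀ k : ℕ, I (k + 1) = (Dx (I k) - if k = 0 then 1 else 0) / vK 1)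
    (k : ℕ) (hk : 1 ≤ k) :
    RepM u (k + 1) (rK 1 * I (k + 1) * yB) := by
  obtain ⟨L, hL, hs⟩ := repI_I Dx I hDxv hI0 hI (k + 1) (by omega)
  rw [hs, helper_sum2]
  apply repM_listsum
  intro a ha
  obtain ⟨hpos, hsum⟩ := hL a ha
  refine repM_congr (repM_single (u := u) ⟨a.1, k + 1 + Multiset.card a.2, 1, 1, a.2, 0⟩ ?_) ?_
  · refine ⟨le_rfl, by dsimp only; omega, hpos, by simp, ?_, ?_⟩
    · dsimp only; simp only [Multiset.sum_zero]; try omega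
    · dsimp only; simp only [Multiset.card_zero]; try omega
  · rw [TD.val]
    dsimp only
    rw [show PuM u 0 = 1 from by simp [PuM]]
    ring

variable (J : ℕ → KBKdV)

lemma repM_dx_listsum (hDxv : ∀ k, Dx (vK k) = vK (k + 1)) (hDxr : ∀ k, Dx (rK k) = rK (k + 1))
    (hu1 : u 1 = vK 1 + rK 0 * rK 1) (hu : ∀ j : ℕ, 1 ≤ j → u (j + 1) = Dx (u j))
    (k : ℕ) (L : List TD) (hL : ∀ t ∈ L, t.Good k) :
    RepM u (k + 1) (Dx ((L.map (TD.val u)).sum) * yB) := by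
  induction L with
  | nil => simpa using repM_zero u (k + 1)
  | cons a L ih =>
    simp only [List.map_cons, List.sum_cons, map_add, add_mul]
    exact repM_add (repM_step Dx u hDxv hDxr hu1 hu k a (hL a (by simp)))
      (ih fun t ht => hL t (List.mem_cons_of_mem _ ht))

lemma repM_J (hDxv : ∀ k, Dx (vK k) = vK (k + 1)) (hDxr : ∀ k, Dx (rK k) = rK (k + 1))
    (hI0 : I 0 = vK 0) (hJ0 : J 0 = rK 0)
    (hI : ∀ k : ℕ, I (k + 1) = (Dx (I k) - if k = 0 then 1 else 0) / vK 1)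
    (hJ : ∀ k : ℕ, J (k + 1) = (Dx (J k) - rK 1 * I (k + 1)) / (vK 1 + rK 0 * rK 1))
    (hu1 : u 1 = vK 1 + rK 0 * rK 1) (hu : ∀ j : ℕ, 1 ≤ j → u (j + 1) = Dx (u j)) :
    ∀ k, 1 ≤ k → RepM u k (J k) := by
  refine Nat.le_induction ?_ ?_
  · have hJ1 : J 1 = rK 1 * zB * yB := by
      rw [hJ 0, hJ0, hDxr 0, I1_eq Dx I hDxv hI0 hI, div_eq_mul_inv, ← yB]
      ring
    refine repM_congr (repM_single (u := u) ⟨1, 1, 1, 1, 0, 0⟩ ?_) ?_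
    · exact ⟨le_rfl, le_rfl, by simp, by simp, by simp, by simp⟩
    · rw [TD.val, hJ1]
      dsimp only
      rw [show PuM u 0 = 1 from by simp [PuM], show PvM (0 : Multiset ℕ) = 1 from by simp [PvM]]
      simp only [qC, map_one]
      ring
  · intro n hn ih
    have hJn : J (n + 1) = Dx (J n) * yB + -(rK 1 * I (n + 1) * yB) := by
      rw [hJ n, div_eq_mul_inv, ← yB]
      ring
    rw [hJn]
    refine repM_add ?_ (repM_neg (repM_rI Dx u I hDxv hI0 hI n hn))
    obtain ⟨L, hL, hs⟩ := ih
    rw [hs]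
    exact repM_dx_listsum Dx u hDxv hDxr hu1 hu n L hL

end IJ

def RepJ (u : ℕ → KBKdV) (k : ℕ) (x : KBKdV) : Prop :=
  ∃ c : ℕ → Multiset ℕ → Multiset ℕ → MvPolynomial (Fin 2) ℚ,
    (∀ d lp mp, (c d lp mp).IsHomogeneous (k + Multiset.card lp + Multiset.card mp + 1)) ∧
    x = ∑ d ∈ Finset.Icc 1 k, ∑ a ∈ Finset.range (k - d + 1),
      ∑ lam ∈ (Finset.univ : Finset (a.Partition)),
        ∑ mu ∈ (Finset.univ : Finset ((k - d - a).Partition)),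
          MvPolynomial.aeval
              (fun i : Fin 2 => if i = 0 then (vK 1)⁻¹ else (vK 1 + rK 0 * rK 1)⁻¹)
              (c d lam.parts mu.parts) *
            rK d * (lam.parts.map fun p => vK (p + 1)).prod *
            (mu.parts.map fun p => u (p + 1)).prod

lemma repJ_zero (u : ℕ → KBKdV) (k : ℕ) : RepJ u k 0 := by
  refine ⟨0, fun d lp mp => MvPolynomial.isHomogeneous_zero _ _ _, ?_⟩
  simp

lemma repJ_add {u k x y} (hx : RepJ u k x) (hy : RepJ u k y) : RepJ u k (x + y) := by
  obtain ⟨c1, hh1, he1⟩ := hx; obtain ⟨c2, hh2, he2⟩ := hy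
  refine ⟨fun d lp mp => c1 d lp mp + c2 d lp mp,
    fun d lp mp => (hh1 d lp mp).add (hh2 d lp mp), ?_⟩
  rw [he1, he2]
  simp only [map_add, add_mul, Finset.sum_add_distrib]

lemma repJ_td (u : ℕ → KBKdV) (k : ℕ) (t : TD) (hg : t.Good k) : RepJ u k (t.val u) := by
  classical
  obtain ⟨q, e0, e1, d, m1, m2⟩ := t
  obtain ⟨hd1, hdk, h1, h2, hsum, he⟩ := hg
  dsimp only at hd1 hdk h1 h2 hsum he
  set f : MvPolynomial (Fin 2) ℚ :=
    MvPolynomial.C q * MvPolynomial.X 0 ^ e0 * MvPolynomial.X 1 ^ e1 with hf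
  refine ⟨fun d' lp mp => if d' = d ∧ lp = m1 ∧ mp = m2 then f else 0, ?_, ?_⟩
  · intro d' lp mp
    show (if d' = d ∧ lp = m1 ∧ mp = m2 then f else 0).IsHomogeneous
      (k + Multiset.card lp + Multiset.card mp + 1)
    by_cases h : d' = d ∧ lp = m1 ∧ mp = m2
    · rw [if_pos h, h.2.1, h.2.2]
      have hh : f.IsHomogeneous (0 + 1 * e0 + 1 * e1) :=
        ((MvPolynomial.isHomogeneous_C _ q).mul
          ((MvPolynomial.isHomogeneous_X ℚ (0 : Fin 2)).pow e0)).mul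
          ((MvPolynomial.isHomogeneous_X ℚ (1 : Fin 2)).pow e1)
      exact (show (0 + 1 * e0 + 1 * e1)
        = k + Multiset.card m1 + Multiset.card m2 + 1 by omega) ▸ hh
    · rw [if_neg h]; exact MvPolynomial.isHomogeneous_zero _ _ _
  · have hb : m2.sum = k - d - m1.sum := by omega
    set lam : (m1.sum).Partition := ⟨m1, fun {i} hi => h1 i hi, rfl⟩ with hlam
    set mu : ((k - d - m1.sum)).Partition := ⟨m2, fun {i} hi => h2 i hi, hb⟩ with hmu
    have key : (∑ d' ∈ Finset.Icc 1 k, ∑ a ∈ Finset.range (k - d' + 1),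
        ∑ lam' ∈ (Finset.univ : Finset (a.Partition)),
          ∑ mu' ∈ (Finset.univ : Finset ((k - d' - a).Partition)),
            MvPolynomial.aeval
                (fun i : Fin 2 => if i = 0 then (vK 1)⁻¹ else (vK 1 + rK 0 * rK 1)⁻¹)
                ((if d' = d ∧ lam'.parts = m1 ∧ mu'.parts = m2 then f else 0)) *
              rK d' * (lam'.parts.map fun p => vK (p + 1)).prod *
              (mu'.parts.map fun p => u (p + 1)).prod)
        = MvPolynomial.aeval
            (fun i : Fin 2 => if i = 0 then (vK 1)⁻¹ else (vK 1 + rK 0 * rK 1)⁻¹) f *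
          rK d * (m1.map fun p => vK (p + 1)).prod * (m2.map fun p => u (p + 1)).prod := by
      rw [Finset.sum_eq_single_of_mem d (Finset.mem_Icc.mpr ⟨hd1, hdk⟩)]
      · rw [Finset.sum_eq_single_of_mem m1.sum (Finset.mem_range.mpr (by omega))]
        · rw [Finset.sum_eq_single_of_mem lam (Finset.mem_univ _)]
          · rw [Finset.sum_eq_single_of_mem mu (Finset.mem_univ _)]
            · rw [if_pos ⟨rfl, rfl, rfl⟩]
            · intro mu' _ hne
              have hp : mu'.parts ≠ m2 := fun hp => hne (Nat.Partition.ext hp)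
              rw [if_neg (by tauto), map_zero, zero_mul, zero_mul, zero_mul]
          · intro lam' _ hne
            refine Finset.sum_eq_zero fun mu' _ => ?_
            have hp : lam'.parts ≠ m1 := fun hp => hne (Nat.Partition.ext hp)
            rw [if_neg (by tauto), map_zero, zero_mul, zero_mul, zero_mul]
        · intro a _ hne
          refine Finset.sum_eq_zero fun lam' _ =>
            Finset.sum_eq_zero fun mu' _ => ?_
          have hp : lam'.parts ≠ m1 := by
            intro hp
            exact hne (by rw [← lam'.parts_sum, hp])
          rw [if_neg (by tauto), map_zero, zero_mul, zero_mul, zero_mul]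
      · intro d' _ hne
        refine Finset.sum_eq_zero fun a _ => Finset.sum_eq_zero fun lam' _ =>
          Finset.sum_eq_zero fun mu' _ => ?_
        rw [if_neg (by tauto), map_zero, zero_mul, zero_mul, zero_mul]
    have ha : (MvPolynomial.aeval
        (fun i : Fin 2 => if i = 0 then (vK 1)⁻¹ else (vK 1 + rK 0 * rK 1)⁻¹) f : KBKdV)
        = qC q * (zB ^ e0 * yB ^ e1) := by
      rw [hf, map_mul, map_mul, map_pow, map_pow, MvPolynomial.aeval_C, MvPolynomial.aeval_X,
        MvPolynomial.aeval_X, if_pos rfl, if_neg (by decide), zB, yB, qC]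
      ring
    rw [TD.val]
    dsimp only
    rw [key, ha, show (m1.map fun p => vK (p + 1)).prod = PvM m1 from rfl,
      show (m2.map fun p => u (p + 1)).prod = PuM u m2 from rfl]
    ring

lemma repJ_of_repM {u : ℕ → KBKdV} {k : ℕ} {x : KBKdV} (h : RepM u k x) : RepJ u k x := by
  obtain ⟨L, hL, hs⟩ := h
  subst hs
  induction L with
  | nil => simpa using repJ_zero u k
  | cons a L ih =>
    simp only [List.map_cons, List.sum_cons]
    exact repJ_add (repJ_td u k a (hL a (by simp)))
      (ih fun t ht => hL t (List.mem_cons_of_mem _ ht))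

/-- Lemma 2.1 (second part): for every `k ≥ 1` there exist polynomials
`c_{d,λ,μ}(z,y) ∈ ℚ[z,y]`, homogeneous of degree `k + ℓ(λ) + ℓ(μ) + 1`, with
`J_k = Σ_{d=1}^{k} Σ_{|λ|+|μ|=k−d} c_{d,λ,μ}(v_1⁻¹, u_1⁻¹) · r_d · Π_i v_{λ_i+1} · Π_j u_{μ_j+1}`
in `K`, where `u_1 = v_1 + r_0 r_1` and `u_{j+1} = ∂(u_j)`. -/
theorem stmt5
    (Dx : Derivation ℚ KBKdV KBKdV)
    (hDxv : ∀ k, Dx (vK k) = vK (k + 1)) (hDxr : ∀ k, Dx (rK k) = rK (k + 1))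
    (I J : ℕ → KBKdV) (hI0 : I 0 = vK 0) (hJ0 : J 0 = rK 0)
    (hI : ∀ k : ℕ, I (k + 1) = (Dx (I k) - if k = 0 then 1 else 0) / vK 1)
    (hJ : ∀ k : ℕ, J (k + 1) = (Dx (J k) - rK 1 * I (k + 1)) / (vK 1 + rK 0 * rK 1))
    (u : ℕ → KBKdV) (hu1 : u 1 = vK 1 + rK 0 * rK 1)
    (hu : ∀ j : ℕ, 1 ≤ j → u (j + 1) = Dx (u j))
    (k : ℕ) (hk : 1 ≤ k) :
    ∃ c : ℕ → Multiset ℕ → Multiset ℕ → MvPolynomial (Fin 2) ℚ,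
      (∀ d lp mp, (c d lp mp).IsHomogeneous (k + Multiset.card lp + Multiset.card mp + 1)) ∧
      J k = ∑ d ∈ Finset.Icc 1 k, ∑ a ∈ Finset.range (k - d + 1),
        ∑ lam ∈ (Finset.univ : Finset (a.Partition)),
          ∑ mu ∈ (Finset.univ : Finset ((k - d - a).Partition)),
            MvPolynomial.aeval
                (fun i : Fin 2 => if i = 0 then (vK 1)⁻¹ else (vK 1 + rK 0 * rK 1)⁻¹)
                (c d lam.parts mu.parts) *
              rK d * (lam.parts.map fun p => vK (p + 1)).prod *
              (mu.parts.map fun p => u (p + 1)).prod := by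
  obtain ⟨c, hc, hx⟩ := repJ_of_repM
    (repM_J Dx u I J hDxv hDxr hI0 hJ0 hI hJ hu1 hu k hk)
  exact ⟨c, hc, hx⟩
end

section
/- Set U_1 := 1 − I_1 and U_2 := 1 − I_1 − J_0 J_1 in K. Then the following inversion identities hold in K: v_1 = 1/U_1; r_1 = J_1/(U_1 U_2); v_2 = I_2/U_1³; and r_2 = J_2/U_2³ + J_1³/(U_1² U_2³) + J_1 I_2 ( 1/(U_1 U_2³) + 1/(U_1² U_2²) + 1/(U_1³ U_2) ). -/
open Finset

set_option maxHeartbeats 1000000 in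
/-- With `U_1 := 1 − I_1` and `U_2 := 1 − I_1 − J_0 J_1`, the inversion identities
`v_1 = 1/U_1`, `r_1 = J_1/(U_1 U_2)`, `v_2 = I_2/U_1³` and
`r_2 = J_2/U_2³ + J_1³/(U_1² U_2³) + J_1 I_2 (1/(U_1 U_2³) + 1/(U_1² U_2²) + 1/(U_1³ U_2))`
hold in `K`. -/
theorem stmt10
    (Dx : Derivation ℚ KBKdV KBKdV)
    (hDxv : ∀ k, Dx (vK k) = vK (k + 1)) (hDxr : ∀ k, Dx (rK k) = rK (k + 1))
    (I J : ℕ → KBKdV) (hI0 : I 0 = vK 0) (hJ0 : J 0 = rK 0)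
    (hI : ∀ k : ℕ, I (k + 1) = (Dx (I k) - if k = 0 then 1 else 0) / vK 1)
    (hJ : ∀ k : ℕ, J (k + 1) = (Dx (J k) - rK 1 * I (k + 1)) / (vK 1 + rK 0 * rK 1)) :
    vK 1 = (1 - I 1)⁻¹ ∧
    rK 1 = J 1 / ((1 - I 1) * (1 - I 1 - J 0 * J 1)) ∧
    vK 2 = I 2 / (1 - I 1) ^ 3 ∧
    rK 2 = J 2 / (1 - I 1 - J 0 * J 1) ^ 3 +
      (J 1) ^ 3 / ((1 - I 1) ^ 2 * (1 - I 1 - J 0 * J 1) ^ 3) +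
      J 1 * I 2 * (((1 - I 1) * (1 - I 1 - J 0 * J 1) ^ 3)⁻¹ +
        ((1 - I 1) ^ 2 * (1 - I 1 - J 0 * J 1) ^ 2)⁻¹ +
        ((1 - I 1) ^ 3 * (1 - I 1 - J 0 * J 1))⁻¹) := by
  have hv1 : vK 1 ≠ 0 := by
    unfold vK
    simp [map_eq_zero_iff _ (IsFractionRing.injective (MvPolynomial (ℕ ⊕ ℕ) ℚ) KBKdV),
      MvPolynomial.X_ne_zero]
  have hW : vK 1 + rK 0 * rK 1 ≠ 0 := by
    unfold vK rK
    rw [← map_mul, ← map_add]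
    rw [Ne, map_eq_zero_iff _ (IsFractionRing.injective (MvPolynomial (ℕ ⊕ ℕ) ℚ) KBKdV)]
    intro h
    have := congrArg (MvPolynomial.eval (fun i => if i = Sum.inl 1 then (1:ℚ) else 0)) h
    simp at this
  obtain ⟨W, hWdef⟩ : ∃ w : KBKdV, w = vK 1 + rK 0 * rK 1 := ⟨_, rfl⟩
  rw [← hWdef] at hW
  simp only [← hWdef] at hJ
  -- I 1
  have hI1 : I 1 = (vK 1 - 1) / vK 1 := by
    rw [hI 0, hI0, hDxv 0]; simp
  have hU1 : 1 - I 1 = (vK 1)⁻¹ := by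
    rw [hI1]; field_simp; ring
  -- Dx (I 1)
  have hDI1 : Dx (I 1) = vK 2 / vK 1 ^ 2 := by
    rw [hI1, Derivation.leibniz_div, map_sub, Derivation.map_one_eq_zero, hDxv 1]
    rw [smul_eq_mul, smul_eq_mul, smul_eq_mul]
    field_simp
    ring
  -- I 2
  have hI2 : I 2 = vK 2 / vK 1 ^ 3 := by
    rw [hI 1, hDI1]
    simp only [if_neg one_ne_zero, sub_zero]
    rw [div_div, ← pow_succ]
  -- J 1
  have hJ1 : J 1 = rK 1 / (vK 1 * W) := by
    rw [hJ 0, hJ0, hDxr 0, hI1]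
    rw [div_eq_div_iff hW (by exact mul_ne_zero hv1 hW)]
    field_simp
    ring
  have hU2 : 1 - I 1 - J 0 * J 1 = W⁻¹ := by
    rw [hU1, hJ0, hJ1]
    field_simp
    rw [hWdef]; ring
  -- Dx W
  have hDW : Dx W = vK 2 + rK 1 * rK 1 + rK 0 * rK 2 := by
    rw [hWdef, map_add, Derivation.leibniz, hDxv 1, hDxr 0, hDxr 1,
      smul_eq_mul, smul_eq_mul]
    ring
  -- Dx (J 1)
  have hDJ1 : Dx (J 1) = (vK 1 * W * rK 2 - rK 1 * (vK 2 * W + vK 1 * (vK 2 + rK 1 * rK 1 + rK 0 * rK 2))) / (vK 1 * W) ^ 2 := by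
    rw [hJ1, Derivation.leibniz_div, Derivation.leibniz, hDxr 1, hDxv 1, hDW]
    simp only [smul_eq_mul]
    field_simp
    ring
  -- J 2
  have hJ2 : J 2 = ((vK 1 * W * rK 2 - rK 1 * (vK 2 * W + vK 1 * (vK 2 + rK 1 * rK 1 + rK 0 * rK 2))) / (vK 1 * W) ^ 2 - rK 1 * (vK 2 / vK 1 ^ 3)) / W := by
    rw [hJ 1, hDJ1, hI2]
  refine ⟨by rw [hU1, inv_inv], ?_, ?_, ?_⟩
  · rw [hU2, hU1, hJ1]
    field_simp
  · rw [hU1, hI2]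
    field_simp
  · rw [hU2, hU1, hJ1, hJ2, hI2]
    field_simp
    have hD : (vK 1 * W) ^ 2 * vK 1 ^ 3 * W * (vK 1 * W) ^ 3 ≠ 0 :=
      mul_ne_zero (mul_ne_zero (mul_ne_zero (pow_ne_zero _ (mul_ne_zero hv1 hW))
        (pow_ne_zero _ hv1)) hW) (pow_ne_zero _ (mul_ne_zero hv1 hW))
    rw [hWdef]
    ring
end

section
/- For every integer n ≥ 1, the identity Σ_{i,j ≥ 0, i+j = n−1} (2i+1)!!·(2j+1)!!/(i!·j!) = n(n+1)·2^{n−2} holds in Q. -/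
open Finset Nat

noncomputable def aQ (i : ℕ) : ℚ := (2 * i + 1).doubleFactorial / i.factorial

lemma aQ_rec (i : ℕ) : ((i : ℚ) + 1) * aQ (i + 1) = (2 * i + 3) * aQ i := by
  have h1 : 2 * (i + 1) + 1 = (2 * i + 1) + 2 := by ring
  have h2 : ((2 * i + 1) + 2).doubleFactorial = (2 * i + 3) * (2 * i + 1).doubleFactorial := by
    rw [Nat.doubleFactorial]
  have hf : ((i.factorial : ℚ)) ≠ 0 := by exact_mod_cast i.factorial_ne_zero
  have hf1 : (((i + 1).factorial : ℚ)) ≠ 0 := by exact_mod_cast (i + 1).factorial_ne_zero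
  unfold aQ
  rw [h1, h2, Nat.factorial_succ]
  push_cast
  field_simp

lemma key_point (i j : ℕ) :
    ((j : ℚ) + 1) * (aQ i * aQ (j + 1)) + ((i : ℚ) + 1) * (aQ (i + 1) * aQ j)
      = 2 * ((i : ℚ) + (j : ℚ) + 3) * (aQ i * aQ j) := by
  linear_combination aQ i * aQ_rec j + aQ j * aQ_rec i

lemma key_sum_s11 (m : ℕ) :
    ∑ i ∈ Finset.range (m + 1), aQ i * aQ (m - i)
      = ((m : ℚ) + 1) * ((m : ℚ) + 2) * (2 : ℚ) ^ ((m : ℤ) - 1) := by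
  induction m with
  | zero =>
      simp [aQ, Nat.doubleFactorial]
  | succ m ih =>
      have hm1 : ((m : ℚ) + 1) ≠ 0 := by positivity
      -- main recurrence: (m+1) * S(m+1) = 2*(m+3) * S(m)
      have hrec : ((m : ℚ) + 1) * ∑ i ∈ Finset.range (m + 2), aQ i * aQ (m + 1 - i)
          = 2 * ((m : ℚ) + 3) * ∑ i ∈ Finset.range (m + 1), aQ i * aQ (m - i) := by
        have hsplit :
            ∑ i ∈ Finset.range (m + 2), aQ i * aQ (m + 1 - i)
              = (∑ i ∈ Finset.range (m + 1), aQ i * aQ (m + 1 - i))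
                + aQ (m + 1) * aQ 0 := by
          rw [Finset.sum_range_succ]
          simp
        rw [hsplit, mul_add, Finset.mul_sum]
        have hpt : ∀ i ∈ Finset.range (m + 1),
            ((m : ℚ) + 1) * (aQ i * aQ (m + 1 - i))
              = 2 * ((m : ℚ) + 3) * (aQ i * aQ (m - i))
                + (((i : ℚ)) * (aQ i * aQ (m + 1 - i))
                  - ((i : ℚ) + 1) * (aQ (i + 1) * aQ (m + 1 - (i + 1)))) := by
          intro i hi
          rw [Finset.mem_range] at hi
          have hile : i ≤ m := Nat.lt_succ_iff.mp hi
          have h1 : m + 1 - i = (m - i) + 1 := by omega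
          have h2 : m + 1 - (i + 1) = m - i := by omega
          have h3 : ((m - i : ℕ) : ℚ) = (m : ℚ) - (i : ℚ) := by
            push_cast [Nat.cast_sub hile]; ring
          rw [h1, h2]
          have := key_point i (m - i)
          rw [h3] at this
          linear_combination this
        rw [Finset.sum_congr rfl hpt, Finset.sum_add_distrib]
        have htel : ∑ i ∈ Finset.range (m + 1),
            (((i : ℚ)) * (aQ i * aQ (m + 1 - i))
              - ((i : ℚ) + 1) * (aQ (i + 1) * aQ (m + 1 - (i + 1))))
            = 0 * (aQ 0 * aQ (m + 1 - 0))
              - ((m : ℚ) + 1) * (aQ (m + 1) * aQ (m + 1 - (m + 1))) := by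
          have := Finset.sum_range_sub' (f := fun i : ℕ =>
            ((i : ℚ)) * (aQ i * aQ (m + 1 - i))) (m + 1)
          push_cast at this ⊢
          convert this using 2 <;> push_cast <;> ring
        rw [htel]
        simp only [Nat.sub_self, Nat.cast_zero, zero_mul, zero_sub]
        rw [Finset.mul_sum]
        ring
      have hS := ih
      have h2 : (2 : ℚ) ^ (((m : ℤ) + 1) - 1) = 2 * (2 : ℚ) ^ ((m : ℤ) - 1) := by
        rw [show ((m : ℤ) + 1) - 1 = ((m : ℤ) - 1) + 1 by ring,
          zpow_add_one₀ (two_ne_zero)]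
        ring
      have goal2 : ((m : ℚ) + 1) * ∑ i ∈ Finset.range (m + 2), aQ i * aQ (m + 1 - i)
          = ((m : ℚ) + 1) * (((m : ℚ) + 1 + 1) * ((m : ℚ) + 1 + 2)
              * (2 : ℚ) ^ (((m : ℤ) + 1) - 1)) := by
        rw [hrec, hS, h2]
        ring
      have := mul_left_cancel₀ hm1 goal2
      push_cast
      convert this using 2 <;> push_cast <;> ring

/-- For every integer `n ≥ 1`,
`Σ_{i+j=n−1} (2i+1)!!·(2j+1)!!/(i!·j!) = n(n+1)·2^{n−2}` in `ℚ`. -/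
theorem stmt11 (n : ℕ) (hn : 1 ≤ n) :
    ∑ i ∈ Finset.range n,
      ((2 * i + 1).doubleFactorial * (2 * (n - 1 - i) + 1).doubleFactorial : ℚ) /
        (i.factorial * (n - 1 - i).factorial)
    = n * (n + 1) * (2 : ℚ) ^ ((n : ℤ) - 2) := by
  obtain ⟨m, rfl⟩ := Nat.exists_eq_add_of_le hn
  have hsum : ∀ i, ((2 * i + 1).doubleFactorial
        * (2 * ((1 + m) - 1 - i) + 1).doubleFactorial : ℚ) /
        (i.factorial * ((1 + m) - 1 - i).factorial) = aQ i * aQ (m - i) := by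
    intro i
    have h1 : (1 + m) - 1 - i = m - i := by omega
    rw [h1]
    unfold aQ
    push_cast
    ring
  rw [show 1 + m = m + 1 by ring] at *
  simp only [hsum]
  rw [key_sum_s11 m]
  have h2 : ((m : ℤ) + 1) - 2 = (m : ℤ) - 1 := by ring
  push_cast [h2]
  ring
end

section
/- Let F₂ ∈ F be the element F₂ := −r·u_2²/(6·u_1³) + (r_1·u_2 + 3r·u_3)/(24·u_1²) + r_1·(r_1² − u_2)/(24·(u_1 − r·r_1)·u_1) + r_2/(8·u_1) − r_2/(24·(u_1 − r·r_1)). Then E(F₂) = F₂ and D(F₂) = (3/2)·F₂. -/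
open Finset

/-- The field `F = ℚ(r, v_1, r_1, v_2, r_2, v_3, r_3)`. -/
abbrev FBKdV : Type := FractionRing (MvPolynomial (Fin 7) ℚ)

/-- The indeterminate `r`, viewed in `F`. -/
noncomputable def rF : FBKdV := algebraMap (MvPolynomial (Fin 7) ℚ) FBKdV (MvPolynomial.X 0)
/-- The indeterminate `v_1`, viewed in `F`. -/
noncomputable def v1F : FBKdV := algebraMap (MvPolynomial (Fin 7) ℚ) FBKdV (MvPolynomial.X 1)
/-- The indeterminate `r_1`, viewed in `F`. -/
noncomputable def r1F : FBKdV := algebraMap (MvPolynomial (Fin 7) ℚ) FBKdV (MvPolynomial.X 2)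
/-- The indeterminate `v_2`, viewed in `F`. -/
noncomputable def v2F : FBKdV := algebraMap (MvPolynomial (Fin 7) ℚ) FBKdV (MvPolynomial.X 3)
/-- The indeterminate `r_2`, viewed in `F`. -/
noncomputable def r2F : FBKdV := algebraMap (MvPolynomial (Fin 7) ℚ) FBKdV (MvPolynomial.X 4)
/-- The indeterminate `v_3`, viewed in `F`. -/
noncomputable def v3F : FBKdV := algebraMap (MvPolynomial (Fin 7) ℚ) FBKdV (MvPolynomial.X 5)
/-- The indeterminate `r_3`, viewed in `F`. -/
noncomputable def r3F : FBKdV := algebraMap (MvPolynomial (Fin 7) ℚ) FBKdV (MvPolynomial.X 6)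

/-- `u_1 := v_1 + r·r_1`. -/
noncomputable def u1F : FBKdV := v1F + rF * r1F
/-- `u_2 := v_2 + r_1² + r·r_2`. -/
noncomputable def u2F : FBKdV := v2F + r1F ^ 2 + rF * r2F
/-- `u_3 := v_3 + 3·r_1·r_2 + r·r_3`. -/
noncomputable def u3F : FBKdV := v3F + 3 * r1F * r2F + rF * r3F

/-- The genus-2 open free energy `F^o_2` in jet variables. -/
noncomputable def F2BKdV : FBKdV :=
  -(rF * u2F ^ 2) / (6 * u1F ^ 3) + (r1F * u2F + 3 * rF * u3F) / (24 * u1F ^ 2) +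
    r1F * (r1F ^ 2 - u2F) / (24 * (u1F - rF * r1F) * u1F) + r2F / (8 * u1F) -
    r2F / (24 * (u1F - rF * r1F))

theorem der_num (D : Derivation ℚ FBKdV FBKdV) (n : ℕ) [n.AtLeastTwo] :
    D (OfNat.ofNat n : FBKdV) = 0 := by
  exact_mod_cast D.map_natCast n

theorem v1F_ne : v1F ≠ 0 := by
  rw [v1F]
  rw [map_ne_zero_iff _ (IsFractionRing.injective (MvPolynomial (Fin 7) ℚ) FBKdV)]
  intro h
  have := congrArg (MvPolynomial.eval (fun _ => (1:ℚ))) h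
  simp at this

theorem u1F_ne : u1F ≠ 0 := by
  rw [u1F, v1F, rF, r1F, ← map_mul, ← map_add]
  rw [map_ne_zero_iff _ (IsFractionRing.injective (MvPolynomial (Fin 7) ℚ) FBKdV)]
  intro h
  have := congrArg (MvPolynomial.eval (fun _ => (1:ℚ))) h
  simp at this

set_option maxHeartbeats 2000000 in
/-- Homogeneity conditions of Theorem 1.1 for `p = 2`: `E(F₂) = F₂` and
`D(F₂) = (3/2)·F₂`, where `E` is the derivation of `F` with `E(r) = 0`,
`E(v_k) = k·v_k`, `E(r_k) = k·r_k`, and `D` the derivation with `D(r) = −r/2`,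
`D(v_k) = (k−1)·v_k`, `D(r_k) = (k−1/2)·r_k` (k = 1, 2, 3). -/
theorem stmt16 (E D : Derivation ℚ FBKdV FBKdV)
    (hEr : E rF = 0)
    (hEv1 : E v1F = v1F) (hEv2 : E v2F = 2 * v2F) (hEv3 : E v3F = 3 * v3F)
    (hEr1 : E r1F = r1F) (hEr2 : E r2F = 2 * r2F) (hEr3 : E r3F = 3 * r3F)
    (hDr : D rF = -(1 / 2 : FBKdV) * rF)
    (hDv1 : D v1F = 0) (hDv2 : D v2F = v2F) (hDv3 : D v3F = 2 * v3F)
    (hDr1 : D r1F = (1 / 2 : FBKdV) * r1F) (hDr2 : D r2F = (3 / 2 : FBKdV) * r2F)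
    (hDr3 : D r3F = (5 / 2 : FBKdV) * r3F) :
    E F2BKdV = F2BKdV ∧ D F2BKdV = (3 / 2 : FBKdV) * F2BKdV := by
  have hvu : u1F - rF * r1F = v1F := by rw [u1F]; ring
  have hv := v1F_ne
  have hu := u1F_ne
  have hEu1 : E u1F = u1F := by
    rw [u1F, Derivation.map_add, Derivation.leibniz, hEv1, hEr, hEr1, smul_eq_mul, smul_eq_mul]
    ring
  have hEu2 : E u2F = 2 * u2F := by
    rw [u2F, Derivation.map_add, Derivation.map_add, Derivation.leibniz_pow,
      Derivation.leibniz, hEv2, hEr, hEr1, hEr2, smul_eq_mul, smul_eq_mul, smul_eq_mul]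
    push_cast
    ring
  have hEu3 : E u3F = 3 * u3F := by
    rw [u3F, Derivation.map_add, Derivation.map_add, Derivation.leibniz,
      Derivation.leibniz, Derivation.leibniz, hEv3, hEr, hEr1, hEr2, hEr3, der_num]
    simp only [smul_eq_mul]
    ring
  have hDu1 : D u1F = 0 := by
    rw [u1F, Derivation.map_add, Derivation.leibniz, hDv1, hDr, hDr1, smul_eq_mul, smul_eq_mul]
    ring
  have hDu2 : D u2F = u2F := by
    rw [u2F, Derivation.map_add, Derivation.map_add, Derivation.leibniz_pow,
      Derivation.leibniz, hDv2, hDr, hDr1, hDr2, smul_eq_mul, smul_eq_mul, smul_eq_mul]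
    push_cast
    ring
  have hDu3 : D u3F = 2 * u3F := by
    rw [u3F, Derivation.map_add, Derivation.map_add, Derivation.leibniz,
      Derivation.leibniz, Derivation.leibniz, hDv3, hDr, hDr1, hDr2, hDr3, der_num]
    simp only [smul_eq_mul]
    ring
  have hE3 : E (3:FBKdV) = 0 := der_num E 3
  have hE4 : E (4:FBKdV) = 0 := der_num E 4
  have hE24 : E (24:FBKdV) = 0 := der_num E 24
  have hD3 : D (3:FBKdV) = 0 := der_num D 3
  have hD4 : D (4:FBKdV) = 0 := der_num D 4
  have hD24 : D (24:FBKdV) = 0 := der_num D 24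
  set N : FBKdV := -(4 * rF * u2F ^ 2 * v1F) + (r1F * u2F + 3 * rF * u3F) * u1F * v1F +
      r1F * (r1F ^ 2 - u2F) * u1F ^ 2 + 3 * r2F * u1F ^ 2 * v1F - r2F * u1F ^ 3 with hN
  have hDn : (24 : FBKdV) * v1F * u1F ^ 3 ≠ 0 :=
    mul_ne_zero (mul_ne_zero (by norm_num) hv) (pow_ne_zero _ hu)
  have key : F2BKdV * (24 * v1F * u1F ^ 3) = N := by
    have e1 : -(rF * u2F ^ 2) / (6 * u1F ^ 3) * (24 * v1F * u1F ^ 3)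
        = -(4 * rF * u2F ^ 2 * v1F) := by
      rw [div_mul_eq_mul_div, div_eq_iff (mul_ne_zero (by norm_num) (pow_ne_zero _ hu))]
      ring
    have e2 : (r1F * u2F + 3 * rF * u3F) / (24 * u1F ^ 2) * (24 * v1F * u1F ^ 3)
        = (r1F * u2F + 3 * rF * u3F) * u1F * v1F := by
      rw [div_mul_eq_mul_div, div_eq_iff (mul_ne_zero (by norm_num) (pow_ne_zero _ hu))]
      ring
    have e3 : r1F * (r1F ^ 2 - u2F) / (24 * v1F * u1F) * (24 * v1F * u1F ^ 3)
        = r1F * (r1F ^ 2 - u2F) * u1F ^ 2 := by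
      rw [div_mul_eq_mul_div,
        div_eq_iff (mul_ne_zero (mul_ne_zero (by norm_num) hv) hu)]
      ring
    have e4 : r2F / (8 * u1F) * (24 * v1F * u1F ^ 3) = 3 * r2F * u1F ^ 2 * v1F := by
      rw [div_mul_eq_mul_div, div_eq_iff (mul_ne_zero (by norm_num) hu)]
      ring
    have e5 : r2F / (24 * v1F) * (24 * v1F * u1F ^ 3) = r2F * u1F ^ 3 := by
      rw [div_mul_eq_mul_div, div_eq_iff (mul_ne_zero (by norm_num) hv)]
      ring
    rw [F2BKdV, hvu, sub_mul, add_mul, add_mul, add_mul, e1, e2, e3, e4, e5, hN]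
  have hEN : E N = 5 * N := by
    rw [hN]
    simp only [Derivation.map_add, Derivation.map_sub, Derivation.map_neg,
      Derivation.leibniz, Derivation.leibniz_pow, hEu1, hEu2, hEu3, hEr, hEr1, hEr2,
      hEv1, der_num, hE3, hE4, hE24, smul_eq_mul, nsmul_eq_mul, Nat.cast_ofNat]
    push_cast
    ring
  have hDN : D N = (3 / 2 : FBKdV) * N := by
    rw [hN]
    simp only [Derivation.map_add, Derivation.map_sub, Derivation.map_neg,
      Derivation.leibniz, Derivation.leibniz_pow, hDu1, hDu2, hDu3, hDr, hDr1, hDr2,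
      hDv1, der_num, hD3, hD4, hD24, smul_eq_mul, nsmul_eq_mul, Nat.cast_ofNat]
    push_cast
    ring
  have hEDn : E (24 * v1F * u1F ^ 3 : FBKdV) = 4 * (24 * v1F * u1F ^ 3) := by
    simp only [Derivation.leibniz, Derivation.leibniz_pow, hEv1, hEu1, der_num, hE24,
      smul_eq_mul, nsmul_eq_mul, Nat.cast_ofNat]
    push_cast
    ring
  have hDDn : D (24 * v1F * u1F ^ 3 : FBKdV) = 0 := by
    simp only [Derivation.leibniz, Derivation.leibniz_pow, hDv1, hDu1, der_num, hD24,
      smul_eq_mul, nsmul_eq_mul, Nat.cast_ofNat]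
    ring
  constructor
  · have h := congrArg E key
    rw [Derivation.leibniz, smul_eq_mul, smul_eq_mul, hEDn, hEN, ← key] at h
    have h2 : E F2BKdV * (24 * v1F * u1F ^ 3) = F2BKdV * (24 * v1F * u1F ^ 3) := by
      linear_combination h
    exact mul_right_cancel₀ hDn h2
  · have h := congrArg D key
    rw [Derivation.leibniz, smul_eq_mul, smul_eq_mul, hDDn, hDN, ← key] at h
    have h2 : D F2BKdV * (24 * v1F * u1F ^ 3) =
        (3 / 2 : FBKdV) * F2BKdV * (24 * v1F * u1F ^ 3) := by
      linear_combination h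
    exact mul_right_cancel₀ hDn h2
end
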